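/- arXiv:2012.03244 — 15 statements merged into one kernel-verified Lean document; each statement's English description precedes it below -/
import Mathlib

section
/- Let μ be the exponential probability distribution on ℝ with rate 1 (density e^{−y} for y ≥ 0). For τ ∈ ℝ define the false alarm probability P_FA(τ) = μ{y : σ² + P_r·w + P_r·m·y > τ} and the miss detection probability P_MD(τ) = μ{y : σ² + (P_r+P_b)·w + (P_r+P_b)·m·y < τ}. Then for every τ ∈ ℝ one has P_FA(τ) + P_MD(τ) = ξ_dl(τ). -/
open MeasureTheory ProbabilityTheory Real

/-- `ν₁(τ)` of the paper (eq. (14)). -/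
noncomputable def nu1 (Pr m w σ2 τ : ℝ) : ℝ :=
  Real.exp ((σ2 + Pr * w - τ) / (Pr * m))

/-- `ν₂(τ)` of the paper (eq. (15)). -/
noncomputable def nu2 (Pr Pb m w σ2 τ : ℝ) : ℝ :=
  Real.exp ((σ2 + (Pr + Pb) * w - τ) / ((Pr + Pb) * m))

/-- The downlink detection error probability `ξ_{w,dl}(τ)` of the paper (eq. (17)). -/
noncomputable def xiDl (Pr Pb m w σ2 τ : ℝ) : ℝ :=
  if τ < σ2 + Pr * w then 1
  else if τ ≤ σ2 + (Pr + Pb) * w then nu1 Pr m w σ2 τ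
  else 1 + nu1 Pr m w σ2 τ - nu2 Pr Pb m w σ2 τ

lemma expMeasure_one_Iic_toReal (x : ℝ) :
    ((expMeasure 1) (Set.Iic x)).toReal = if 0 ≤ x then 1 - Real.exp (-x) else 0 := by
  haveI := isProbabilityMeasure_expMeasure (one_pos (α := ℝ))
  have h := cdf_expMeasure_eq (one_pos (α := ℝ)) x
  rw [cdf_eq_real] at h
  simpa [measureReal_def] using h

lemma expMeasure_one_singleton (x : ℝ) : (expMeasure 1) {x} = 0 := by
  rw [expMeasure, gammaMeasure, withDensity_apply _ (measurableSet_singleton x)]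
  rw [setLIntegral_measure_zero _ _ (measure_singleton x)]

lemma expMeasure_one_Iio_toReal (x : ℝ) :
    ((expMeasure 1) (Set.Iio x)).toReal = if 0 ≤ x then 1 - Real.exp (-x) else 0 := by
  have : (expMeasure 1) (Set.Iic x) = (expMeasure 1) (Set.Iio x) := by
    refine le_antisymm ?_ (measure_mono Set.Iio_subset_Iic_self)
    calc (expMeasure 1) (Set.Iic x) = (expMeasure 1) (Set.Iio x ∪ {x}) := by
            rw [Set.Iio_union_right]
      _ ≤ (expMeasure 1) (Set.Iio x) + (expMeasure 1) {x} := measure_union_le _ _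
      _ = (expMeasure 1) (Set.Iio x) := by rw [expMeasure_one_singleton, add_zero]
  rw [← this, expMeasure_one_Iic_toReal]

lemma expMeasure_one_Ioi_toReal (x : ℝ) :
    ((expMeasure 1) (Set.Ioi x)).toReal = if 0 ≤ x then Real.exp (-x) else 1 := by
  haveI := isProbabilityMeasure_expMeasure (one_pos (α := ℝ))
  have hc : Set.Ioi x = (Set.Iic x)ᶜ := Set.compl_Iic.symm
  rw [hc, prob_compl_eq_one_sub measurableSet_Iic,
    ENNReal.toReal_sub_of_le (prob_le_one) (by simp), ENNReal.toReal_one,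
    expMeasure_one_Iic_toReal]
  split_ifs <;> ring

/-- Equations (14), (15), (17) of the paper: with the reflected channel gain
exponentially distributed, the false alarm probability plus the miss detection
probability equals the piecewise detection error probability `ξ_dl`. -/
theorem falseAlarm_add_missDetection_eq_xiDl
    (Pr Pb m w σ2 : ℝ) (hPr : 0 < Pr) (hPb : 0 < Pb) (hm : 0 < m)
    (hw : 0 ≤ w) (hσ2 : 0 ≤ σ2) :
    ∀ τ : ℝ,
      ((expMeasure 1) {y : ℝ | σ2 + Pr * w + Pr * m * y > τ}).toReal +
        ((expMeasure 1) {y : ℝ | σ2 + (Pr + Pb) * w + (Pr + Pb) * m * y < τ}).toReal =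
      xiDl Pr Pb m w σ2 τ := by
  intro τ
  have hc1 : (0 : ℝ) < Pr * m := mul_pos hPr hm
  have hc2 : (0 : ℝ) < (Pr + Pb) * m := mul_pos (by linarith) hm
  set a1 := σ2 + Pr * w with ha1
  set a2 := σ2 + (Pr + Pb) * w with ha2
  have hset1 : {y : ℝ | σ2 + Pr * w + Pr * m * y > τ} = Set.Ioi ((τ - a1) / (Pr * m)) := by
    ext y; simp only [Set.mem_setOf_eq, Set.mem_Ioi, gt_iff_lt]
    rw [div_lt_iff₀ hc1]; constructor <;> intro h <;> nlinarith
  have hset2 : {y : ℝ | σ2 + (Pr + Pb) * w + (Pr + Pb) * m * y < τ}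
      = Set.Iio ((τ - a2) / ((Pr + Pb) * m)) := by
    ext y; simp only [Set.mem_setOf_eq, Set.mem_Iio]
    rw [lt_div_iff₀ hc2]; constructor <;> intro h <;> nlinarith
  have hexp1 : Real.exp (-((τ - a1) / (Pr * m))) = nu1 Pr m w σ2 τ := by
    rw [nu1, ← neg_div, neg_sub]
  have hexp2 : Real.exp (-((τ - a2) / ((Pr + Pb) * m))) = nu2 Pr Pb m w σ2 τ := by
    rw [nu2, ← neg_div, neg_sub]
  rw [hset1, hset2, expMeasure_one_Ioi_toReal, expMeasure_one_Iio_toReal, hexp1, hexp2, xiDl,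
    ← ha1, ← ha2]
  have ha12 : a1 ≤ a2 := by nlinarith
  have ht1 : (0 ≤ (τ - a1) / (Pr * m)) ↔ a1 ≤ τ := by
    rw [le_div_iff₀ hc1, zero_mul]; exact sub_nonneg
  have ht2 : (0 ≤ (τ - a2) / ((Pr + Pb) * m)) ↔ a2 ≤ τ := by
    rw [le_div_iff₀ hc2, zero_mul]; exact sub_nonneg
  simp only [ht1, ht2]
  split_ifs <;> try first | linarith | ring
  all_goals
    rename_i h1 h2 h3 h4
    have hτ : τ = a2 := le_antisymm h4 h2
    have hn : nu2 Pr Pb m w σ2 τ = 1 := by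
      rw [nu2, hτ, ha2, sub_self, zero_div, Real.exp_zero]
    rw [hn]; ring
end

section
/- Set κ = (P_r+P_b)/P_r and define τ* = σ² + (P_r+P_b)·w if w ≥ (P_r·m/P_b)·ln κ, and τ* = σ² + (P_r·(P_r+P_b)·m/P_b)·ln κ otherwise. Then τ* is a global minimizer of the downlink detection error probability: ξ_dl(τ*) ≤ ξ_dl(τ) for every τ ∈ ℝ. -/
open Real

lemma exp_bernoulli {p : ℝ} (hp : 1 ≤ p) (y : ℝ) :
    1 + p * (Real.exp y - 1) ≤ Real.exp (p * y) := by
  have h1 : (-1 : ℝ) ≤ Real.exp y - 1 := by nlinarith [Real.exp_pos y]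
  have h2 := one_add_mul_self_le_rpow_one_add h1 hp
  have h3 : (1 + (Real.exp y - 1)) ^ p = Real.exp (p * y) := by
    rw [show (1 : ℝ) + (Real.exp y - 1) = Real.exp y by ring,
      ← Real.exp_mul, mul_comm]
  linarith [h2.trans_eq h3]

lemma key_min {a b s s₀ : ℝ} (hb : 0 < b) (hba : b ≤ a)
    (h : Real.exp ((a - b) * s₀) = a / b) :
    Real.exp (-(a * s₀)) - Real.exp (-(b * s₀)) ≤
      Real.exp (-(a * s)) - Real.exp (-(b * s)) := by
  set p := a / b with hp_def
  have hp : 1 ≤ p := (le_div_iff₀ hb).2 (by linarith)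
  set y := -(b * (s - s₀)) with hy_def
  have e1 : Real.exp (-(a * s)) = Real.exp (-(a * s₀)) * Real.exp (p * y) := by
    rw [← Real.exp_add]; congr 1
    rw [hp_def, hy_def]; linear_combination (s - s₀) * (div_mul_cancel₀ a hb.ne')
  have e2 : Real.exp (-(b * s)) = Real.exp (-(b * s₀)) * Real.exp y := by
    rw [← Real.exp_add]; congr 1; rw [hy_def]; ring
  have e3 : Real.exp (-(b * s₀)) = p * Real.exp (-(a * s₀)) := by
    rw [← h, ← Real.exp_add]; congr 1; ring
  have hB := exp_bernoulli hp y
  have h4 := Real.exp_pos (-(a * s₀))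
  rw [e1, e2, e3]
  nlinarith [Real.exp_pos y]

lemma key_mono {a b sB s : ℝ} (hb : 0 < b) (hba : b ≤ a) (hs : sB ≤ s)
    (hK : a * Real.exp (-(a * sB)) ≤ b * Real.exp (-(b * sB))) :
    Real.exp (-(a * sB)) - Real.exp (-(b * sB)) ≤
      Real.exp (-(a * s)) - Real.exp (-(b * s)) := by
  set p := a / b with hp_def
  have hp : 1 ≤ p := (le_div_iff₀ hb).2 (by linarith)
  set y := -(b * (s - sB)) with hy_def
  have e1 : Real.exp (-(a * s)) = Real.exp (-(a * sB)) * Real.exp (p * y) := by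
    rw [← Real.exp_add]; congr 1
    rw [hp_def, hy_def]; linear_combination (s - sB) * (div_mul_cancel₀ a hb.ne')
  have e2 : Real.exp (-(b * s)) = Real.exp (-(b * sB)) * Real.exp y := by
    rw [← Real.exp_add]; congr 1; rw [hy_def]; ring
  have hB := exp_bernoulli hp y
  have hL2 : b + a * (Real.exp y - 1) ≤ b * Real.exp (p * y) := by
    have := mul_le_mul_of_nonneg_left hB hb.le
    have hab : b * (p * (Real.exp y - 1)) = a * (Real.exp y - 1) := by
      rw [hp_def]; linear_combination (Real.exp y - 1) * (div_mul_cancel₀ a hb.ne')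
    nlinarith
  have hy1 : Real.exp y ≤ 1 := by
    rw [Real.exp_le_one_iff, hy_def]
    nlinarith
  have hu := Real.exp_pos (-(a * sB))
  have hv := Real.exp_pos (-(b * sB))
  have hX := Real.exp_pos (p * y)
  have hy0 : y ≤ 0 := by rw [hy_def]; nlinarith
  have hX1 : Real.exp (p * y) ≤ 1 := by
    rw [Real.exp_le_one_iff]
    nlinarith
  rw [e1, e2]
  have step1 : a * (Real.exp (-(a*sB)) * (1 - Real.exp (p*y)))
      ≤ b * (Real.exp (-(b*sB)) * (1 - Real.exp (p*y))) := by
    have : 0 ≤ 1 - Real.exp (p*y) := by linarith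
    nlinarith
  have step2 : b * (1 - Real.exp (p*y)) ≤ a * (1 - Real.exp y) := by nlinarith
  have step3 : b * (Real.exp (-(b*sB)) * (1 - Real.exp (p*y)))
      ≤ a * (Real.exp (-(b*sB)) * (1 - Real.exp y)) := by nlinarith
  have := step1.trans step3
  have ha : 0 < a := lt_of_lt_of_le hb hba
  nlinarith

/-- Theorem 1 of the paper: the optimal detection threshold `τ*` globally minimizes the
downlink detection error probability. -/
theorem optimal_threshold_minimizes_xiDl
    (Pr Pb m w σ2 : ℝ) (hPr : 0 < Pr) (hPb : 0 < Pb) (hm : 0 < m)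
    (hw : 0 ≤ w) (hσ2 : 0 ≤ σ2) :
    let κ : ℝ := (Pr + Pb) / Pr
    let τstar : ℝ :=
      if w ≥ (Pr * m / Pb) * Real.log κ then σ2 + (Pr + Pb) * w
      else σ2 + (Pr * (Pr + Pb) * m / Pb) * Real.log κ
    ∀ τ : ℝ, xiDl Pr Pb m w σ2 τstar ≤ xiDl Pr Pb m w σ2 τ := by
  intro κ τstar τ
  have hκdef : κ = (Pr + Pb) / Pr := rfl
  have hPrPb : 0 < Pr + Pb := by linarith
  have hPrm : 0 < Pr * m := mul_pos hPr hm
  have hPbm : 0 < (Pr + Pb) * m := mul_pos hPrPb hm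
  have hκ1 : 1 < κ := by rw [hκdef, lt_div_iff₀ hPr]; linarith
  have hκpos : 0 < κ := by linarith
  have hlog : 0 ≤ Real.log κ := Real.log_nonneg hκ1.le
  -- a, b
  set a : ℝ := (Pr * m)⁻¹ with ha_def
  set b : ℝ := ((Pr + Pb) * m)⁻¹ with hb_def
  have ha : 0 < a := by positivity
  have hbpos : 0 < b := by positivity
  have hba : b ≤ a := by
    rw [ha_def, hb_def]
    apply inv_anti₀ hPrm
    exact mul_le_mul_of_nonneg_right (le_add_of_nonneg_right hPb.le) hm.le
  have habκ : a / b = κ := by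
    rw [ha_def, hb_def, hκdef]; field_simp
  -- conversion to E-form
  have hv1 : ∀ t : ℝ, Real.exp ((σ2 + Pr * w - t) / (Pr * m))
      = Real.exp (w / m) * Real.exp (-(a * (t - σ2))) := by
    intro t
    rw [← Real.exp_add]; congr 1
    rw [ha_def]; field_simp; ring
  have hv2 : ∀ t : ℝ, Real.exp ((σ2 + (Pr + Pb) * w - t) / ((Pr + Pb) * m))
      = Real.exp (w / m) * Real.exp (-(b * (t - σ2))) := by
    intro t
    rw [← Real.exp_add]; congr 1
    rw [hb_def]; field_simp; ring
  have hEpos : 0 < Real.exp (w / m) := Real.exp_pos _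
  have hone : Real.exp (w / m) * Real.exp (-(b * ((Pr + Pb) * w))) = 1 := by
    rw [← Real.exp_add, show w / m + -(b * ((Pr + Pb) * w)) = 0 by
      rw [hb_def]; field_simp; ring]
    exact Real.exp_zero
  have hτdef : τstar = if w ≥ (Pr * m / Pb) * Real.log κ then σ2 + (Pr + Pb) * w
      else σ2 + (Pr * (Pr + Pb) * m / Pb) * Real.log κ := rfl
  clear_value κ τstar a b
  by_cases hc : w ≥ (Pr * m / Pb) * Real.log κ
  · -- Case 1 : τ* = B
    have hτs : τstar = σ2 + (Pr + Pb) * w := by rw [hτdef, if_pos hc]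
    have hxis : xiDl Pr Pb m w σ2 τstar
        = Real.exp ((σ2 + Pr * w - (σ2 + (Pr + Pb) * w)) / (Pr * m)) := by
      have h9 : 0 ≤ Pb * w := mul_nonneg hPb.le hw
      rw [hτs, xiDl, if_neg (not_lt.2 (by linarith)), if_pos le_rfl, nu1]
    rw [hxis]
    -- hK : a e^{-a sB} ≤ b e^{-b sB}
    have hc' : Pr * m * Real.log κ ≤ Pb * w := by
      rw [ge_iff_le, div_mul_eq_mul_div, div_le_iff₀ hPb] at hc
      linarith
    have hge : κ ≤ Real.exp ((a - b) * ((Pr + Pb) * w)) := by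
      have harg : (a - b) * ((Pr + Pb) * w) = Pb * w / (Pr * m) := by
        rw [ha_def, hb_def]; field_simp; ring
      rw [harg, ← Real.exp_log hκpos]
      apply Real.exp_le_exp.2
      rw [le_div_iff₀ hPrm]
      linarith [hc', mul_comm (Real.log κ) (Pr * m)]
    have hK : a * Real.exp (-(a * ((Pr + Pb) * w)))
        ≤ b * Real.exp (-(b * ((Pr + Pb) * w))) := by
      have hsplit : Real.exp (-(a * ((Pr + Pb) * w)))
          = Real.exp (-(b * ((Pr + Pb) * w))) * Real.exp (-((a - b) * ((Pr + Pb) * w))) := by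
        rw [← Real.exp_add]; congr 1; ring
      have hinv : Real.exp (-((a - b) * ((Pr + Pb) * w))) ≤ b / a := by
        rw [Real.exp_neg]
        have h1 : κ⁻¹ = b / a := by
          rw [← habκ]; field_simp
        rw [← h1]
        exact inv_anti₀ hκpos hge
      rw [hsplit]
      have he := Real.exp_pos (-(b * ((Pr + Pb) * w)))
      calc a * (Real.exp (-(b * ((Pr + Pb) * w))) * Real.exp (-((a - b) * ((Pr + Pb) * w))))
          ≤ a * (Real.exp (-(b * ((Pr + Pb) * w))) * (b / a)) := by
            apply mul_le_mul_of_nonneg_left _ ha.le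
            exact mul_le_mul_of_nonneg_left hinv he.le
        _ = b * Real.exp (-(b * ((Pr + Pb) * w))) := by field_simp
      done
    by_cases h1 : τ < σ2 + Pr * w
    · rw [xiDl, if_pos h1]
      rw [Real.exp_le_one_iff]
      have h9 : 0 ≤ Pb * w := mul_nonneg hPb.le hw
      apply div_nonpos_of_nonpos_of_nonneg (by linarith) hPrm.le
    · by_cases h2 : τ ≤ σ2 + (Pr + Pb) * w
      · rw [xiDl, if_neg h1, if_pos h2, nu1]
        apply Real.exp_le_exp.2
        rw [div_le_div_iff₀ hPrm hPrm]
        exact mul_le_mul_of_nonneg_right (by linarith) hPrm.le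
      · rw [xiDl, if_neg h1, if_neg h2, nu1, nu2]
        push_neg at h2
        have hkey := key_mono hbpos hba (show (Pr + Pb) * w ≤ τ - σ2 by linarith) hK
        rw [hv1 τ, hv2 τ, hv1 (σ2 + (Pr + Pb) * w)]
        have hσs : σ2 + (Pr + Pb) * w - σ2 = (Pr + Pb) * w := by ring
        rw [hσs]
        have h5 := mul_le_mul_of_nonneg_left hkey hEpos.le
        rw [mul_sub, mul_sub] at h5
        linarith [hone]
  · -- Case 2 : τ* = σ2 + T
    push_neg at hc
    have hτs : τstar = σ2 + (Pr * (Pr + Pb) * m / Pb) * Real.log κ := by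
      rw [hτdef, if_neg (not_le.2 hc)]
    set T : ℝ := (Pr * (Pr + Pb) * m / Pb) * Real.log κ with hT_def
    have hT0 : 0 ≤ T := by
      apply mul_nonneg _ hlog; positivity
    have hTB : (Pr + Pb) * w < T := by
      have h2 : (Pr + Pb) * w < (Pr + Pb) * ((Pr * m / Pb) * Real.log κ) :=
        mul_lt_mul_of_pos_left hc hPrPb
      have h3 : (Pr + Pb) * ((Pr * m / Pb) * Real.log κ) = T := by
        rw [hT_def]; ring
      linarith
    have h₀ : Real.exp ((a - b) * T) = a / b := by
      have harg : (a - b) * T = Real.log κ := by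
        rw [hT_def, ha_def, hb_def]; field_simp; ring
      rw [harg, Real.exp_log hκpos, habκ]
    clear_value T
    have hA : σ2 + Pr * w ≤ σ2 + T := by
      have h9 : 0 ≤ Pb * w := mul_nonneg hPb.le hw
      linarith [hTB]
    have hB : σ2 + (Pr + Pb) * w < σ2 + T := by linarith [hTB]
    have hxis : xiDl Pr Pb m w σ2 τstar
        = 1 + Real.exp ((σ2 + Pr * w - (σ2 + T)) / (Pr * m))
          - Real.exp ((σ2 + (Pr + Pb) * w - (σ2 + T)) / ((Pr + Pb) * m)) := by
      rw [hτs, xiDl, if_neg (not_lt.2 hA), if_neg (not_le.2 hB), nu1, nu2]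
    rw [hxis]
    have hσT : σ2 + T - σ2 = T := by ring
    by_cases h1 : τ < σ2 + Pr * w
    · rw [xiDl, if_pos h1]
      have hmono : Real.exp ((σ2 + Pr * w - (σ2 + T)) / (Pr * m))
          ≤ Real.exp ((σ2 + (Pr + Pb) * w - (σ2 + T)) / ((Pr + Pb) * m)) := by
        apply Real.exp_le_exp.2
        rw [div_le_div_iff₀ hPrm hPbm]
        have hid : (σ2 + Pr * w - (σ2 + T)) * ((Pr + Pb) * m)
            = (σ2 + (Pr + Pb) * w - (σ2 + T)) * (Pr * m) - Pb * m * T := by ring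
        rw [hid]
        linarith [mul_nonneg (mul_nonneg hPb.le hm.le) hT0]
      linarith
    · have hstep : 1 + Real.exp ((σ2 + Pr * w - (σ2 + T)) / (Pr * m))
          - Real.exp ((σ2 + (Pr + Pb) * w - (σ2 + T)) / ((Pr + Pb) * m))
          ≤ Real.exp ((σ2 + Pr * w - (σ2 + (Pr + Pb) * w)) / (Pr * m)) := by
        have hkey := key_min (s := (Pr + Pb) * w) (s₀ := T) hbpos hba h₀
        rw [hv1 (σ2 + T), hv2 (σ2 + T), hv1 (σ2 + (Pr + Pb) * w), hσT,
          show σ2 + (Pr + Pb) * w - σ2 = (Pr + Pb) * w by ring]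
        have h5 := mul_le_mul_of_nonneg_left hkey hEpos.le
        rw [mul_sub, mul_sub] at h5
        linarith [hone]
      by_cases h2 : τ ≤ σ2 + (Pr + Pb) * w
      · rw [xiDl, if_neg h1, if_pos h2, nu1]
        apply hstep.trans
        apply Real.exp_le_exp.2
        rw [div_le_div_iff₀ hPrm hPrm]
        exact mul_le_mul_of_nonneg_right (by linarith) hPrm.le
      · rw [xiDl, if_neg h1, if_neg h2, nu1, nu2]
        push_neg at h2
        have hkey := key_min (s := τ - σ2) (s₀ := T) hbpos hba h₀
        rw [hv1 (σ2 + T), hv2 (σ2 + T), hv1 τ, hv2 τ, hσT]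
        have h5 := mul_le_mul_of_nonneg_left hkey hEpos.le
        rw [mul_sub, mul_sub] at h5
        linarith
end

section
/- Set κ = (P_r+P_b)/P_r and define τ* = σ² + (P_r+P_b)·w if w ≥ (P_r·m/P_b)·ln κ, and τ* = σ² + (P_r·(P_r+P_b)·m/P_b)·ln κ otherwise. Then ξ_dl(τ*) = exp(−P_b·w/(P_r·m)) if w ≥ (P_r·m/P_b)·ln κ, and ξ_dl(τ*) = 1 − (P_b/P_r)·κ^{−(P_r+P_b)/P_b}·exp(w/m) otherwise. -/
open Real

/-- Equation (18) of the paper: the value of the downlink detection error probability at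
the optimal detection threshold `τ*` of Theorem 1. -/
theorem xiDl_at_optimal_threshold
    (Pr Pb m w σ2 : ℝ) (hPr : 0 < Pr) (hPb : 0 < Pb) (hm : 0 < m)
    (hw : 0 ≤ w) (hσ2 : 0 ≤ σ2) :
    let κ : ℝ := (Pr + Pb) / Pr
    let τstar : ℝ :=
      if w ≥ (Pr * m / Pb) * Real.log κ then σ2 + (Pr + Pb) * w
      else σ2 + (Pr * (Pr + Pb) * m / Pb) * Real.log κ
    xiDl Pr Pb m w σ2 τstar =
      if w ≥ (Pr * m / Pb) * Real.log κ then Real.exp (-(Pb * w) / (Pr * m))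
      else 1 - (Pb / Pr) * κ ^ (-((Pr + Pb) / Pb)) * Real.exp (w / m) := by
  intro κ τstar
  have hPrPb : 0 < Pr + Pb := by linarith
  have hκpos : 0 < κ := div_pos hPrPb hPr
  by_cases h : w ≥ (Pr * m / Pb) * Real.log κ
  · simp only [τstar, if_pos h, xiDl]
    rw [if_neg (by nlinarith), if_pos le_rfl]
    unfold nu1
    congr 1
    field_simp
    ring
  · simp only [τstar, if_neg h]
    push_neg at h
    have hlogpos : 0 < Real.log κ := by
      by_contra hc
      push_neg at hc
      have : (Pr * m / Pb) * Real.log κ ≤ 0 :=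
        mul_nonpos_of_nonneg_of_nonpos (le_of_lt (by positivity)) hc
      linarith
    have key : (Pr + Pb) * w < Pr * (Pr + Pb) * m / Pb * Real.log κ := by
      have := mul_lt_mul_of_pos_left h hPrPb
      calc (Pr + Pb) * w < (Pr + Pb) * (Pr * m / Pb * Real.log κ) := this
        _ = Pr * (Pr + Pb) * m / Pb * Real.log κ := by ring
    have hPrw : Pr * w ≤ (Pr + Pb) * w := by nlinarith
    unfold xiDl
    rw [if_neg (by push_neg; nlinarith), if_neg (by push_neg; nlinarith)]
    unfold nu1 nu2
    have hE1 : Real.exp ((σ2 + Pr * w - (σ2 + Pr * (Pr + Pb) * m / Pb * Real.log κ)) / (Pr * m))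
        = κ ^ (-((Pr + Pb) / Pb)) * Real.exp (w / m) := by
      rw [Real.rpow_def_of_pos hκpos, ← Real.exp_add]
      congr 1
      field_simp
      ring
    have hE2 : Real.exp ((σ2 + (Pr + Pb) * w - (σ2 + Pr * (Pr + Pb) * m / Pb * Real.log κ)) /
        ((Pr + Pb) * m)) = κ ^ (-(Pr / Pb)) * Real.exp (w / m) := by
      rw [Real.rpow_def_of_pos hκpos, ← Real.exp_add]
      congr 1
      field_simp
      ring
    rw [hE1, hE2]
    have hsplit : κ ^ (-(Pr / Pb)) = κ * κ ^ (-((Pr + Pb) / Pb)) := by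
      have h1 : -(Pr / Pb) = 1 + (-((Pr + Pb) / Pb)) := by field_simp; ring
      rw [h1, Real.rpow_add hκpos, Real.rpow_one]
    rw [hsplit]
    have hκval : κ = (Pr + Pb) / Pr := rfl
    rw [hκval]
    field_simp
    ring
end

section
/- Let α = P_b·φ₁/(P_r·N), κ = (P_r+P_b)/P_r, and T = (P_r·N/(P_b·φ₁))·ln κ. Define ξ* : [0,∞) → ℝ by ξ*(h) = exp(−α·h) for h ≥ T, and ξ*(h) = 1 − (P_b/P_r)·κ^{−(P_r+P_b)/P_b}·exp(φ₁·h/N) for 0 ≤ h < T. Then ∫₀^∞ ξ*(h)·e^{−h} dh = F_dl(P_r, P_b). -/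
open Real MeasureTheory

/-- The closed-form minimum average detection error probability of Theorem 2 of the paper
(eq. (19)). -/
noncomputable def Fdl (Pr Pb φ1 N : ℝ) : ℝ :=
  ((Pr + Pb) / Pr) ^ (-(1 + Pr * N / (Pb * φ1))) / (Pb * φ1 / (Pr * N) + 1) + 1 -
    ((Pr + Pb) / Pr) ^ (-(Pr * N / (Pb * φ1))) -
    ((Pb / Pr) * ((Pr + Pb) / Pr) ^ (-((Pr + Pb) / Pb)) / (φ1 / N - 1)) *
      (((Pr + Pb) / Pr) ^ ((Pr / Pb) * (1 - N / φ1)) - 1)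

/-- Theorem 2 of the paper: averaging the minimum detection error probability (eq. (18))
against the exponential density of the direct channel gain gives the closed form `F_dl`. -/
theorem integral_min_detection_error_eq_Fdl
    (Pr Pb φ1 N : ℝ) (hPr : 0 < Pr) (hPb : 0 < Pb) (hφ1 : 0 < φ1) (hN : 0 < N)
    (hne : φ1 ≠ N) :
    let α : ℝ := Pb * φ1 / (Pr * N)
    let κ : ℝ := (Pr + Pb) / Pr
    let T : ℝ := (Pr * N / (Pb * φ1)) * Real.log κ
    let ξstar : ℝ → ℝ := fun h =>
      if T ≤ h then Real.exp (-(α * h))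
      else 1 - (Pb / Pr) * κ ^ (-((Pr + Pb) / Pb)) * Real.exp (φ1 * h / N)
    ∫ h in Set.Ioi (0 : ℝ), ξstar h * Real.exp (-h) = Fdl Pr Pb φ1 N := by
  intro α κ T ξstar
  have hαdef : α = Pb * φ1 / (Pr * N) := rfl
  have hκdef : κ = (Pr + Pb) / Pr := rfl
  have hTdef : T = (Pr * N / (Pb * φ1)) * Real.log κ := rfl
  have hκ1 : 1 < κ := by
    rw [hκdef, lt_div_iff₀ hPr]; linarith
  have hκ0 : 0 < κ := one_pos.trans hκ1
  have hL : 0 < Real.log κ := Real.log_pos hκ1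
  have hα : 0 < α := by rw [hαdef]; positivity
  have hT : 0 < T := by rw [hTdef]; positivity
  set c : ℝ := (Pb / Pr) * κ ^ (-((Pr + Pb) / Pb)) with hc
  have hξ : ∀ h, ξstar h = if T ≤ h then Real.exp (-(α * h))
      else 1 - c * Real.exp (φ1 * h / N) := fun _ => rfl
  have hβ1 : φ1 / N - 1 ≠ 0 := by
    have h1 : φ1 / N ≠ 1 := by
      rw [Ne, div_eq_one_iff_eq hN.ne']; exact hne
    intro h; exact h1 (by linarith)
  -- the two pieces
  have heq2 : Set.EqOn (fun h => ξstar h * Real.exp (-h))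
      (fun h => Real.exp (-((α + 1) * h))) (Set.Ioi T) := by
    intro h hh
    simp only [hξ, if_pos (le_of_lt (Set.mem_Ioi.mp hh))]
    rw [← Real.exp_add]
    ring_nf
  have heq1 : Set.EqOn (fun h => ξstar h * Real.exp (-h))
      (fun h => Real.exp (-h) - c * Real.exp ((φ1 / N - 1) * h)) (Set.Ioo 0 T) := by
    intro h hh
    simp only [hξ, if_neg (not_le.mpr hh.2)]
    have hx : Real.exp (φ1 * h / N) * Real.exp (-h) = Real.exp ((φ1 / N - 1) * h) := by
      rw [← Real.exp_add]
      congr 1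
      field_simp
      ring
    rw [sub_mul, one_mul, mul_assoc, hx]
  have hcont1 : Continuous fun h : ℝ => Real.exp (-h) - c * Real.exp ((φ1 / N - 1) * h) := by
    fun_prop
  have hint1 : IntegrableOn (fun h => ξstar h * Real.exp (-h)) (Set.Ioc 0 T) := by
    exact ((hcont1.integrableOn_Ioc.mono_set Set.Ioo_subset_Ioc_self).congr_fun
      heq1.symm measurableSet_Ioo).congr_set_ae Ioo_ae_eq_Ioc.symm
  have hint2 : IntegrableOn (fun h => ξstar h * Real.exp (-h)) (Set.Ioi T) := by
    exact (exp_neg_integrableOn_Ioi T (by positivity : (0:ℝ) < α + 1)).congr_fun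
      (fun x hx => by simp only [neg_mul]; exact (heq2 hx).symm) measurableSet_Ioi
  -- value of the tail piece
  have hval2 : ∫ h in Set.Ioi T, ξstar h * Real.exp (-h)
      = (α + 1)⁻¹ * Real.exp (-((α + 1) * T)) := by
    rw [setIntegral_congr_fun measurableSet_Ioi heq2]
    have := integral_comp_mul_left_Ioi (fun x => Real.exp (-x)) T
      (by positivity : (0:ℝ) < α + 1)
    simpa [integral_exp_neg_Ioi, integral_exp_Iic, smul_eq_mul] using this
  -- value of the head piece
  have key : ∀ k : ℝ, k ≠ 0 → ∫ x in (0:ℝ)..T, Real.exp (k * x)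
      = (Real.exp (k * T) - 1) / k := by
    intro k hk
    rw [intervalIntegral.integral_comp_mul_left (fun x => Real.exp x) hk]
    simp [integral_exp, smul_eq_mul]
    field_simp
  have hval1 : ∫ h in Set.Ioc 0 T, ξstar h * Real.exp (-h)
      = (1 - Real.exp (-T)) - c * ((Real.exp ((φ1 / N - 1) * T) - 1) / (φ1 / N - 1)) := by
    rw [integral_Ioc_eq_integral_Ioo, setIntegral_congr_fun measurableSet_Ioo heq1,
      ← integral_Ioc_eq_integral_Ioo, ← intervalIntegral.integral_of_le hT.le]
    have hi1 : IntervalIntegrable (fun h : ℝ => Real.exp (-h)) volume 0 T :=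
      (by fun_prop : Continuous fun h : ℝ => Real.exp (-h)).intervalIntegrable 0 T
    have hi2 : IntervalIntegrable (fun h : ℝ => c * Real.exp ((φ1 / N - 1) * h)) volume 0 T :=
      (by fun_prop : Continuous fun h : ℝ => c * Real.exp ((φ1 / N - 1) * h)).intervalIntegrable 0 T
    rw [intervalIntegral.integral_sub hi1 hi2, intervalIntegral.integral_const_mul,
      key _ hβ1]
    have e1 : ∫ x in (0:ℝ)..T, Real.exp (-x) = (Real.exp (-T) - 1) / (-1) := by
      have := key (-1) (by norm_num)
      simpa [neg_one_mul] using this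
    rw [e1]
    ring
  -- combine
  have hun : Set.Ioc (0:ℝ) T ∪ Set.Ioi T = Set.Ioi 0 := Set.Ioc_union_Ioi_eq_Ioi hT.le
  rw [← hun, setIntegral_union (Set.Ioc_disjoint_Ioi le_rfl) measurableSet_Ioi hint1 hint2,
    hval1, hval2]
  -- exponent identities
  have hαa : α * (Pr * N / (Pb * φ1)) = 1 := by
    rw [hαdef]; field_simp
  have h1 : -((α + 1) * T) = Real.log κ * (-(1 + Pr * N / (Pb * φ1))) := by
    rw [hTdef]; linear_combination (-Real.log κ) * hαa
  have h2 : (φ1 / N - 1) * T = Real.log κ * ((Pr / Pb) * (1 - N / φ1)) := by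
    rw [hTdef]; field_simp
  have h3 : -T = Real.log κ * (-(Pr * N / (Pb * φ1))) := by
    rw [hTdef]; ring
  rw [h1, h2, h3, hc]
  unfold Fdl
  rw [← hκdef]
  simp only [Real.rpow_def_of_pos hκ0]
  rw [hαdef]
  ring
end

section
/- For fixed P_r, φ₁, N > 0 with φ₁ ≠ N, the closed-form minimum average detection error probability tends to zero as the covert transmit power grows: F_dl(P_r, P_b) → 0 as P_b → ∞. -/
open Real Filter

lemma log_kappa_div_tendsto (Pr : ℝ) (hPr : 0 < Pr) :
    Tendsto (fun Pb : ℝ => log ((Pr + Pb) / Pr) / Pb) atTop (nhds 0) := by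
  have hO : (fun x : ℝ => log ((Pr + x) / Pr)) =o[atTop] (fun x : ℝ => x) := by
    have h1 : (fun x : ℝ => log (Pr + x)) =o[atTop] (fun x : ℝ => Pr + x) :=
      Real.isLittleO_log_id_atTop.comp_tendsto
        (tendsto_atTop_add_const_left atTop Pr tendsto_id)
    have h2 : (fun x : ℝ => Pr + x) =O[atTop] (fun x : ℝ => x) := by
      rw [Asymptotics.isBigO_iff]
      refine ⟨|Pr| + 1, ?_⟩
      filter_upwards [eventually_ge_atTop (1 : ℝ)] with x hx
      have hxabs : |x| = x := abs_of_nonneg (by linarith)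
      calc |Pr + x| ≤ |Pr| + |x| := abs_add_le _ _
        _ ≤ |Pr| * |x| + |x| := by nlinarith [abs_nonneg Pr]
        _ = (|Pr| + 1) * |x| := by ring
    have h3 : (fun x : ℝ => log (Pr + x)) =o[atTop] (fun x : ℝ => x) := h1.trans_isBigO h2
    have h4 : (fun _ : ℝ => log Pr) =o[atTop] (fun x : ℝ => x) :=
      Asymptotics.isLittleO_const_id_atTop _
    refine (h3.sub h4).congr' ?_ (by rfl)
    filter_upwards [eventually_gt_atTop (0 : ℝ)] with x hx
    rw [log_div (by positivity) (ne_of_gt hPr)]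
  exact hO.tendsto_div_nhds_zero

lemma log_kappa_tendsto (Pr : ℝ) (hPr : 0 < Pr) :
    Tendsto (fun Pb : ℝ => log ((Pr + Pb) / Pr)) atTop atTop :=
  Real.tendsto_log_atTop.comp
    ((tendsto_atTop_add_const_left atTop Pr tendsto_id).atTop_div_const hPr)

/-- Claim 1) of Remark 3 of the paper: the minimum average detection error probability
tends to zero as the covert transmit power grows. -/
theorem Fdl_tendsto_zero_as_Pb_atTop
    (Pr φ1 N : ℝ) (hPr : 0 < Pr) (hφ1 : 0 < φ1) (hN : 0 < N) (hne : φ1 ≠ N) :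
    Tendsto (fun Pb => Fdl Pr Pb φ1 N) atTop (nhds 0) := by
  set L : ℝ → ℝ := fun Pb => log ((Pr + Pb) / Pr) with hLdef
  have hL : Tendsto L atTop atTop := log_kappa_tendsto Pr hPr
  have hLP : Tendsto (fun Pb => L Pb / Pb) atTop (nhds 0) := log_kappa_div_tendsto Pr hPr
  -- the exp/log form of Fdl
  set g : ℝ → ℝ := fun Pb =>
    exp (-(L Pb)) * exp (-(Pr * N / φ1) * (L Pb / Pb)) * (Pb * φ1 / (Pr * N) + 1)⁻¹
      + 1 - exp (-(Pr * N / φ1) * (L Pb / Pb))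
      - (Pb / (Pr + Pb)) * exp (-Pr * (L Pb / Pb)) * (1 / (φ1 / N - 1)) *
          (exp ((Pr * (1 - N / φ1)) * (L Pb / Pb)) - 1) with hgdef
  have heq : (fun Pb => Fdl Pr Pb φ1 N) =ᶠ[atTop] g := by
    filter_upwards [eventually_gt_atTop (0 : ℝ)] with Pb hPb
    have hκ : (0 : ℝ) < (Pr + Pb) / Pr := by positivity
    have hexpL : exp (L Pb) = (Pr + Pb) / Pr := Real.exp_log hκ
    have hPb' : Pb ≠ 0 := ne_of_gt hPb
    have hPrPb : Pr + Pb ≠ 0 := by positivity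
    have hφN : φ1 / N - 1 ≠ 0 := by
      intro h
      apply hne
      have h' : φ1 / N = 1 := by linarith
      field_simp at h'
      exact h'
    have hD : Pb * φ1 / (Pr * N) + 1 ≠ 0 := by positivity
    simp only [Fdl, Real.rpow_def_of_pos hκ, hgdef]
    simp only [show log ((Pr + Pb) / Pr) = L Pb from rfl]
    have e1 : L Pb * (-(1 + Pr * N / (Pb * φ1)))
        = -(L Pb) + -(Pr * N / φ1) * (L Pb / Pb) := by
      field_simp; ring
    have e2 : L Pb * (-(Pr * N / (Pb * φ1))) = -(Pr * N / φ1) * (L Pb / Pb) := by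
      field_simp
    have e3 : L Pb * (-((Pr + Pb) / Pb)) = -(L Pb) + -Pr * (L Pb / Pb) := by
      field_simp; ring
    have e4 : L Pb * (Pr / Pb * (1 - N / φ1)) = (Pr * (1 - N / φ1)) * (L Pb / Pb) := by
      field_simp
    rw [e1, e2, e3, e4, Real.exp_add, Real.exp_add]
    have hexpnegL : exp (-(L Pb)) = Pr / (Pr + Pb) := by
      rw [Real.exp_neg, hexpL]
      field_simp
    rw [hexpnegL]
    have hmul : Pb / Pr * (Pr / (Pr + Pb) * rexp (-Pr * (L Pb / Pb)))
        = Pb / (Pr + Pb) * rexp (-Pr * (L Pb / Pb)) := by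
      field_simp
    have hterm : Pb / Pr * (Pr / (Pr + Pb) * rexp (-Pr * (L Pb / Pb))) / (φ1 / N - 1)
        = Pb / (Pr + Pb) * rexp (-Pr * (L Pb / Pb)) * (1 / (φ1 / N - 1)) := by
      rw [hmul, div_eq_mul_inv, one_div]
    rw [hterm, div_eq_mul_inv (Pr / (Pr + Pb) * rexp (-(Pr * N / φ1) * (L Pb / Pb)))]
  refine Tendsto.congr' heq.symm ?_
  -- limits of the pieces
  have hexp1 : Tendsto (fun Pb => exp (-(Pr * N / φ1) * (L Pb / Pb))) atTop (nhds 1) := by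
    have : Tendsto (fun Pb => -(Pr * N / φ1) * (L Pb / Pb)) atTop (nhds 0) := by
      simpa using hLP.const_mul (-(Pr * N / φ1))
    simpa [Function.comp_def] using (Real.continuous_exp.tendsto 0).comp this
  have hexp2 : Tendsto (fun Pb => exp (-Pr * (L Pb / Pb))) atTop (nhds 1) := by
    have : Tendsto (fun Pb => -Pr * (L Pb / Pb)) atTop (nhds 0) := by
      simpa using hLP.const_mul (-Pr)
    simpa [Function.comp_def] using (Real.continuous_exp.tendsto 0).comp this
  have hexp3 : Tendsto (fun Pb => exp ((Pr * (1 - N / φ1)) * (L Pb / Pb))) atTop (nhds 1) := by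
    have : Tendsto (fun Pb => (Pr * (1 - N / φ1)) * (L Pb / Pb)) atTop (nhds 0) := by
      simpa using hLP.const_mul (Pr * (1 - N / φ1))
    simpa [Function.comp_def] using (Real.continuous_exp.tendsto 0).comp this
  have hexpnegL : Tendsto (fun Pb => exp (-(L Pb))) atTop (nhds 0) := by
    exact Real.tendsto_exp_atBot.comp (tendsto_neg_atBot_iff.mpr hL)
  have hinv : Tendsto (fun Pb : ℝ => (Pb * φ1 / (Pr * N) + 1)⁻¹) atTop (nhds 0) := by
    refine tendsto_inv_atTop_zero.comp ?_
    refine tendsto_atTop_add_const_right atTop 1 ?_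
    exact (tendsto_id.atTop_mul_const hφ1).atTop_div_const (by positivity)
  have hfrac : Tendsto (fun Pb : ℝ => Pb / (Pr + Pb)) atTop (nhds 1) := by
    have h1 : Tendsto (fun Pb : ℝ => Pr / (Pr + Pb)) atTop (nhds 0) :=
      Tendsto.div_atTop tendsto_const_nhds (tendsto_atTop_add_const_left atTop Pr tendsto_id)
    have : Tendsto (fun Pb : ℝ => 1 - Pr / (Pr + Pb)) atTop (nhds 1) := by
      simpa using (tendsto_const_nhds (x := (1:ℝ))).sub h1
    refine this.congr' ?_
    filter_upwards [eventually_gt_atTop (0 : ℝ)] with Pb hPb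
    have : Pr + Pb ≠ 0 := by positivity
    field_simp
    ring
  have hmain : Tendsto g atTop (nhds (0 * 1 * 0 + 1 - 1 - 1 * 1 * (1 / (φ1 / N - 1)) * (1 - 1))) := by
    exact ((((hexpnegL.mul hexp1).mul hinv).add tendsto_const_nhds).sub hexp1).sub
      (((hfrac.mul hexp2).mul tendsto_const_nhds).mul (hexp3.sub tendsto_const_nhds))
  simpa using hmain
end

section
/- For fixed P_b, φ₁, N > 0 with φ₁ ≠ N, the closed-form minimum average detection error probability tends to one as the public transmit power grows: F_dl(P_r, P_b) → 1 as P_r → ∞. -/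
open Real Filter

/-- Claim 2) of Remark 3 of the paper: the minimum average detection error probability
tends to one as the public transmit power grows. -/
theorem Fdl_tendsto_one_as_Pr_atTop
    (Pb φ1 N : ℝ) (hPb : 0 < Pb) (hφ1 : 0 < φ1) (hN : 0 < N) (hne : φ1 ≠ N) :
    Tendsto (fun Pr => Fdl Pr Pb φ1 N) atTop (nhds 1) := by
  have hPb' := hPb.ne'
  have hφ1' := hφ1.ne'
  have hN' := hN.ne'
  set lg : ℝ → ℝ := fun Pr => Real.log ((Pr + Pb) / Pr) with hlg
  set g : ℝ → ℝ := fun Pr => Pr * lg Pr with hg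
  set c1 : ℝ := N / (Pb * φ1) with hc1
  set c2 : ℝ := (1 - N / φ1) / Pb with hc2
  set F : ℝ → ℝ := fun Pr =>
    Real.exp (-(lg Pr)) * Real.exp (-(c1 * g Pr)) / (Pb * φ1 / (Pr * N) + 1) + 1 -
      Real.exp (-(c1 * g Pr)) -
      ((Pb / Pr) * Real.exp (-((1 / Pb) * g Pr + lg Pr)) / (φ1 / N - 1)) *
        (Real.exp (c2 * g Pr) - 1) with hF
  -- eventual equality
  have heq : ∀ᶠ Pr in atTop, Fdl Pr Pb φ1 N = F Pr := by
    filter_upwards [eventually_gt_atTop (0 : ℝ)] with Pr hPr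
    have hPr' := hPr.ne'
    have hκ : 0 < (Pr + Pb) / Pr := div_pos (by linarith) hPr
    unfold Fdl
    rw [Real.rpow_def_of_pos hκ, Real.rpow_def_of_pos hκ, Real.rpow_def_of_pos hκ,
      Real.rpow_def_of_pos hκ]
    have e1 : Real.log ((Pr + Pb) / Pr) * (-(1 + Pr * N / (Pb * φ1)))
        = -(lg Pr) + -(c1 * g Pr) := by
      simp only [hlg, hg, hc1]; field_simp; ring
    have e2 : Real.log ((Pr + Pb) / Pr) * (-(Pr * N / (Pb * φ1))) = -(c1 * g Pr) := by
      simp only [hlg, hg, hc1]; field_simp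
    have e3 : Real.log ((Pr + Pb) / Pr) * (-((Pr + Pb) / Pb))
        = -((1 / Pb) * g Pr + lg Pr) := by
      simp only [hlg, hg]; field_simp
    have e4 : Real.log ((Pr + Pb) / Pr) * ((Pr / Pb) * (1 - N / φ1)) = c2 * g Pr := by
      simp only [hlg, hg, hc2]; field_simp
    rw [e1, e2, e3, e4, Real.exp_add]
  rw [tendsto_congr' heq]
  -- limits of the building blocks
  have hlg0 : Tendsto lg atTop (nhds 0) := by
    have h1 : Tendsto (fun Pr : ℝ => (Pr + Pb) / Pr) atTop (nhds 1) := by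
      have : Tendsto (fun Pr : ℝ => 1 + Pb / Pr) atTop (nhds (1 + 0)) :=
        tendsto_const_nhds.add (tendsto_const_nhds.div_atTop tendsto_id)
      refine (this.congr' ?_).mono_right (by norm_num)
      filter_upwards [eventually_gt_atTop (0 : ℝ)] with Pr hPr
      field_simp
    have := (Real.continuousAt_log (by norm_num : (1:ℝ) ≠ 0)).tendsto.comp h1
    simpa [Real.log_one, Function.comp_def] using this
  have hgPb : Tendsto g atTop (nhds Pb) := by
    refine (Real.tendsto_mul_log_one_add_div_atTop Pb).congr' ?_
    filter_upwards [eventually_gt_atTop (0 : ℝ)] with Pr hPr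
    have hPr' := hPr.ne'
    simp only [hg, hlg]
    congr 1
    field_simp
  have hC : Tendsto (fun Pr : ℝ => Pb / Pr) atTop (nhds 0) :=
    tendsto_const_nhds.div_atTop tendsto_id
  have hD : Tendsto (fun Pr : ℝ => Pb * φ1 / (Pr * N)) atTop (nhds 0) :=
    tendsto_const_nhds.div_atTop (Tendsto.atTop_mul_const hN tendsto_id)
  have hexp1 : Tendsto (fun Pr => Real.exp (-(lg Pr))) atTop (nhds 1) := by
    have := (Real.continuous_exp.tendsto (-(0:ℝ))).comp hlg0.neg
    simpa [Function.comp_def] using this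
  have hexp2 : Tendsto (fun Pr => Real.exp (-(c1 * g Pr))) atTop
      (nhds (Real.exp (-(c1 * Pb)))) :=
    (Real.continuous_exp.tendsto _).comp ((hgPb.const_mul c1).neg)
  have hexp3 : Tendsto (fun Pr => Real.exp (-((1 / Pb) * g Pr + lg Pr))) atTop
      (nhds (Real.exp (-((1 / Pb) * Pb + 0)))) :=
    (Real.continuous_exp.tendsto _).comp (((hgPb.const_mul (1 / Pb)).add hlg0).neg)
  have hexp4 : Tendsto (fun Pr => Real.exp (c2 * g Pr)) atTop
      (nhds (Real.exp (c2 * Pb))) :=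
    (Real.continuous_exp.tendsto _).comp (hgPb.const_mul c2)
  have hT1 : Tendsto
      (fun Pr => Real.exp (-(lg Pr)) * Real.exp (-(c1 * g Pr)) / (Pb * φ1 / (Pr * N) + 1))
      atTop (nhds (1 * Real.exp (-(c1 * Pb)) / (0 + 1))) :=
    (hexp1.mul hexp2).div (hD.add tendsto_const_nhds) (by norm_num)
  have hT3 : Tendsto
      (fun Pr => ((Pb / Pr) * Real.exp (-((1 / Pb) * g Pr + lg Pr)) / (φ1 / N - 1)) *
        (Real.exp (c2 * g Pr) - 1)) atTop
      (nhds (((0 : ℝ) * Real.exp (-((1 / Pb) * Pb + 0)) / (φ1 / N - 1)) *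
        (Real.exp (c2 * Pb) - 1))) :=
    (((hC.mul hexp3).div_const _).mul (hexp4.sub tendsto_const_nhds))
  have hconst : Tendsto (fun _ : ℝ => (1 : ℝ)) atTop (nhds 1) := tendsto_const_nhds
  have hFinal := ((hT1.add hconst).sub hexp2).sub hT3
  convert hFinal using 2
  ring
end

section
/- For fixed P_r, φ₁, N > 0 with φ₁ ≠ N, the function P_b ↦ F_dl(P_r, P_b) is strictly decreasing on (0, ∞). -/
open Real Filter

noncomputable def Gaux (Pr φ1 N x : ℝ) : ℝ :=
  1 - ((Pr + x) / Pr) ^ (-(Pr * N / (x * φ1))) +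
    Pr * N / (x * φ1 + Pr * N) * ((Pr + x) / Pr) ^ (-(Pr * N / (x * φ1))) / ((Pr + x) / Pr) -
    x * N / (Pr * (φ1 - N)) *
      (((Pr + x) / Pr) ^ (-(Pr * N / (x * φ1))) - ((Pr + x) / Pr) ^ (-(Pr / x))) /
      ((Pr + x) / Pr)

noncomputable def Eaux (Pr φ1 N x : ℝ) : ℝ :=
  N / φ1 / ((Pr + x) / Pr * Pr) *
    (Real.log ((Pr + x) / Pr) / (x / Pr * (1 - N / φ1)) *
        (((Pr + x) / Pr) ^ (-(Pr / x)) - ((Pr + x) / Pr) ^ (-(Pr * N / (x * φ1)))) -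
      ((Pr + x) / Pr) ^ (-(Pr * N / (x * φ1))) *
        (1 / (N / φ1 + x / Pr) ^ 2 +
          Real.log ((Pr + x) / Pr) / (x / Pr * (N / φ1 + x / Pr))))

lemma Fdl_eq_Gaux (Pr φ1 N x : ℝ) (hPr : 0 < Pr) (hφ1 : 0 < φ1) (hN : 0 < N)
    (hne : φ1 ≠ N) (hx : 0 < x) : Fdl Pr x φ1 N = Gaux Pr φ1 N x := by
  have hk : 0 < (Pr + x) / Pr := by positivity
  have hx0 : x ≠ 0 := hx.ne'
  have hφ0 : φ1 ≠ 0 := hφ1.ne'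
  have hN0 : N ≠ 0 := hN.ne'
  have hsub : φ1 - N ≠ 0 := sub_ne_zero.mpr hne
  have hdiv : φ1 / N - 1 ≠ 0 := by
    rw [sub_ne_zero]
    exact fun h => hne (by field_simp at h; linarith)
  have hden1 : x * φ1 / (Pr * N) + 1 ≠ 0 := by positivity
  have hden2 : x * φ1 + Pr * N ≠ 0 := by positivity
  unfold Fdl Gaux
  rw [show -(1 + Pr * N / (x * φ1)) = -(Pr * N / (x * φ1)) + (-1) by ring,
      show -((Pr + x) / x) = -(Pr / x) + (-1) by field_simp; ring,
      show (Pr / x) * (1 - N / φ1) = Pr / x + -(Pr * N / (x * φ1)) by field_simp; ring,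
      Real.rpow_add hk, Real.rpow_add hk, Real.rpow_add hk, Real.rpow_neg_one,
      Real.rpow_neg hk.le (Pr * N / (x * φ1)), Real.rpow_neg hk.le (Pr / x)]
  set u := ((Pr + x) / Pr) ^ (Pr * N / (x * φ1)) with hu
  set v := ((Pr + x) / Pr) ^ (Pr / x) with hv
  have hu0 : u ≠ 0 := (Real.rpow_pos_of_pos hk _).ne'
  have hv0 : v ≠ 0 := (Real.rpow_pos_of_pos hk _).ne'
  have hk0 : (Pr + x) / Pr ≠ 0 := hk.ne'
  field_simp
  ring

set_option maxHeartbeats 2000000 in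
lemma Gaux_hasDerivAt (Pr φ1 N x : ℝ) (hPr : 0 < Pr) (hφ1 : 0 < φ1) (hN : 0 < N)
    (hne : φ1 ≠ N) (hx : 0 < x) :
    HasDerivAt (fun y => Gaux Pr φ1 N y) (Eaux Pr φ1 N x) x := by
  have hk : 0 < (Pr + x) / Pr := by positivity
  have hx0 : x ≠ 0 := hx.ne'
  have hPr0 : Pr ≠ 0 := hPr.ne'
  have hφ0 : φ1 ≠ 0 := hφ1.ne'
  have hN0 : N ≠ 0 := hN.ne'
  have hsub : φ1 - N ≠ 0 := sub_ne_zero.mpr hne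
  have hden2 : x * φ1 + Pr * N ≠ 0 := by positivity
  have hk0 : (Pr + x) / Pr ≠ 0 := hk.ne'
  -- derivative of the base
  have hκ : HasDerivAt (fun y : ℝ => (Pr + y) / Pr) (1 / Pr) x := by
    simpa using ((hasDerivAt_id x).const_add Pr).div_const Pr
  -- derivative of the exponent -(Pr*N/(y*φ1))
  have hg : HasDerivAt (fun y : ℝ => -(Pr * N / (y * φ1))) (Pr * N / (x ^ 2 * φ1)) x := by
    have h := (hasDerivAt_inv hx0).const_mul (-(Pr * N / φ1))
    have hfun : (fun y : ℝ => -(Pr * N / (y * φ1))) = fun y => -(Pr * N / φ1) * y⁻¹ := by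
      funext y; field_simp
    rw [hfun]
    refine h.congr_deriv ?_
    field_simp
  -- derivative of the exponent -(Pr/y)
  have hh : HasDerivAt (fun y : ℝ => -(Pr / y)) (Pr / x ^ 2) x := by
    have h := (hasDerivAt_inv hx0).const_mul (-Pr)
    have hfun : (fun y : ℝ => -(Pr / y)) = fun y => -Pr * y⁻¹ := by
      funext y; field_simp
    rw [hfun]
    refine h.congr_deriv ?_
    field_simp
  have hm : HasDerivAt (fun y : ℝ => ((Pr + y) / Pr) ^ (-(Pr * N / (y * φ1))))
      (1 / Pr * (-(Pr * N / (x * φ1))) * ((Pr + x) / Pr) ^ (-(Pr * N / (x * φ1)) - 1) +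
        Pr * N / (x ^ 2 * φ1) * ((Pr + x) / Pr) ^ (-(Pr * N / (x * φ1))) *
          Real.log ((Pr + x) / Pr)) x := hκ.rpow hg hk
  have hs : HasDerivAt (fun y : ℝ => ((Pr + y) / Pr) ^ (-(Pr / y)))
      (1 / Pr * (-(Pr / x)) * ((Pr + x) / Pr) ^ (-(Pr / x) - 1) +
        Pr / x ^ 2 * ((Pr + x) / Pr) ^ (-(Pr / x)) * Real.log ((Pr + x) / Pr)) x :=
    hκ.rpow hh hk
  have hA : HasDerivAt (fun y : ℝ => Pr * N / (y * φ1 + Pr * N))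
      ((0 * (x * φ1 + Pr * N) - Pr * N * φ1) / (x * φ1 + Pr * N) ^ 2) x := by
    have hden : HasDerivAt (fun y : ℝ => y * φ1 + Pr * N) φ1 x := by
      simpa using ((hasDerivAt_id x).mul_const φ1).add_const (Pr * N)
    exact (hasDerivAt_const x (Pr * N)).div hden hden2
  have hB : HasDerivAt (fun y : ℝ => y * N / (Pr * (φ1 - N))) (N / (Pr * (φ1 - N))) x := by
    simpa using ((hasDerivAt_id x).mul_const N).div_const (Pr * (φ1 - N))
  have hT2 := (hA.mul hm).div hκ hk0
  have hT3 := (hB.mul (hm.sub hs)).div hκ hk0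
  have hG := (((hasDerivAt_const x (1 : ℝ)).sub hm).add hT2).sub hT3
  have hshape : (fun y => Gaux Pr φ1 N y) =
      fun y => 1 - ((Pr + y) / Pr) ^ (-(Pr * N / (y * φ1))) +
        Pr * N / (y * φ1 + Pr * N) * ((Pr + y) / Pr) ^ (-(Pr * N / (y * φ1))) / ((Pr + y) / Pr) -
        y * N / (Pr * (φ1 - N)) *
          (((Pr + y) / Pr) ^ (-(Pr * N / (y * φ1))) - ((Pr + y) / Pr) ^ (-(Pr / y))) /
          ((Pr + y) / Pr) := rfl
  rw [hshape]
  refine HasDerivAt.congr_deriv hG ?_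
  simp only [Pi.mul_apply, Pi.sub_apply]
  rw [Real.rpow_sub hk, Real.rpow_sub hk, Real.rpow_one]
  unfold Eaux
  set u := ((Pr + x) / Pr) ^ (-(Pr * N / (x * φ1))) with hu
  set v := ((Pr + x) / Pr) ^ (-(Pr / x)) with hv
  set L := Real.log ((Pr + x) / Pr) with hL
  have h1r : 1 - N / φ1 ≠ 0 := by
    rw [sub_ne_zero]; exact fun h => hne (by field_simp at h; linarith)
  have hrt : N / φ1 + x / Pr ≠ 0 := by positivity
  field_simp
  ring

lemma Eaux_neg (Pr φ1 N x : ℝ) (hPr : 0 < Pr) (hφ1 : 0 < φ1) (hN : 0 < N)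
    (hne : φ1 ≠ N) (hx : 0 < x) : Eaux Pr φ1 N x < 0 := by
  have hk1 : 1 < (Pr + x) / Pr := by
    rw [lt_div_iff₀ hPr]; linarith
  have hk : 0 < (Pr + x) / Pr := lt_trans one_pos hk1
  have hL : 0 < Real.log ((Pr + x) / Pr) := Real.log_pos hk1
  have hmpos : 0 < ((Pr + x) / Pr) ^ (-(Pr * N / (x * φ1))) := Real.rpow_pos_of_pos hk _
  have hT2 : 0 < ((Pr + x) / Pr) ^ (-(Pr * N / (x * φ1))) *
      (1 / (N / φ1 + x / Pr) ^ 2 +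
        Real.log ((Pr + x) / Pr) / (x / Pr * (N / φ1 + x / Pr))) := by
    apply mul_pos hmpos
    have h1 : (0:ℝ) < 1 / (N / φ1 + x / Pr) ^ 2 := by positivity
    have h2 : (0:ℝ) < Real.log ((Pr + x) / Pr) / (x / Pr * (N / φ1 + x / Pr)) :=
      div_pos hL (by positivity)
    linarith
  have hT1 : Real.log ((Pr + x) / Pr) / (x / Pr * (1 - N / φ1)) *
      (((Pr + x) / Pr) ^ (-(Pr / x)) - ((Pr + x) / Pr) ^ (-(Pr * N / (x * φ1)))) < 0 := by
    rcases lt_or_gt_of_ne hne with hlt | hgt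
    · -- φ1 < N : exponent ratio r > 1
      have hr : 1 < N / φ1 := (one_lt_div hφ1).2 hlt
      have hcoef : Real.log ((Pr + x) / Pr) / (x / Pr * (1 - N / φ1)) < 0 := by
        apply div_neg_of_pos_of_neg hL
        apply mul_neg_of_pos_of_neg (by positivity)
        linarith
      have hexp : -(Pr * N / (x * φ1)) < -(Pr / x) := by
        rw [neg_lt_neg_iff]
        rw [div_lt_div_iff₀ (by positivity) (by positivity)]
        nlinarith [mul_pos hPr hx, mul_pos (mul_pos hPr hx) hφ1]
      have hsm : ((Pr + x) / Pr) ^ (-(Pr * N / (x * φ1))) < ((Pr + x) / Pr) ^ (-(Pr / x)) :=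
        (Real.rpow_lt_rpow_left_iff hk1).2 hexp
      have : 0 < ((Pr + x) / Pr) ^ (-(Pr / x)) - ((Pr + x) / Pr) ^ (-(Pr * N / (x * φ1))) := by
        linarith
      exact mul_neg_of_neg_of_pos hcoef this
    · -- N < φ1 : r < 1
      have hr : N / φ1 < 1 := (div_lt_one hφ1).2 hgt
      have hcoef : 0 < Real.log ((Pr + x) / Pr) / (x / Pr * (1 - N / φ1)) := by
        apply div_pos hL
        apply mul_pos (by positivity)
        linarith
      have hexp : -(Pr / x) < -(Pr * N / (x * φ1)) := by
        rw [neg_lt_neg_iff]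
        rw [div_lt_div_iff₀ (by positivity) (by positivity)]
        nlinarith [mul_pos hPr hx]
      have hsm : ((Pr + x) / Pr) ^ (-(Pr / x)) < ((Pr + x) / Pr) ^ (-(Pr * N / (x * φ1))) :=
        (Real.rpow_lt_rpow_left_iff hk1).2 hexp
      have : ((Pr + x) / Pr) ^ (-(Pr / x)) - ((Pr + x) / Pr) ^ (-(Pr * N / (x * φ1))) < 0 := by
        linarith
      exact mul_neg_of_pos_of_neg hcoef this
  unfold Eaux
  apply mul_neg_of_pos_of_neg (by positivity)
  linarith

/-- The minimum average detection error probability is strictly decreasing in the covert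
transmit power `P_b` (cf. Fig. 2 and Proposition 2 of the paper). -/
theorem Fdl_strictAntiOn_Pb
    (Pr φ1 N : ℝ) (hPr : 0 < Pr) (hφ1 : 0 < φ1) (hN : 0 < N) (hne : φ1 ≠ N) :
    StrictAntiOn (fun Pb => Fdl Pr Pb φ1 N) (Set.Ioi (0 : ℝ)) := by
  have key : StrictAntiOn (fun y => Gaux Pr φ1 N y) (Set.Ioi (0 : ℝ)) := by
    apply strictAntiOn_of_deriv_neg (convex_Ioi 0)
    · intro y hy
      exact (Gaux_hasDerivAt Pr φ1 N y hPr hφ1 hN hne hy).continuousAt.continuousWithinAt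
    · intro y hy
      rw [interior_Ioi] at hy
      rw [(Gaux_hasDerivAt Pr φ1 N y hPr hφ1 hN hne hy).deriv]
      exact Eaux_neg Pr φ1 N y hPr hφ1 hN hne hy
  intro a ha b hb hab
  have h := key ha hb hab
  simpa only [Fdl_eq_Gaux Pr φ1 N a hPr hφ1 hN hne ha,
    Fdl_eq_Gaux Pr φ1 N b hPr hφ1 hN hne hb] using h
end

section
/- For fixed P_b, φ₁, N > 0 with φ₁ ≠ N, the function P_r ↦ F_dl(P_r, P_b) is strictly increasing on (0, ∞). -/
open Real Filter

noncomputable def wf (y : ℝ) : ℝ := y * Real.log y / (1 - y)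

noncomputable def Hf (a y : ℝ) : ℝ :=
  (1 / (1 - a)) * ((1 - y) * Real.exp (a * wf y) / (1 - (1 - a) * y)
    - a * ((1 - y) * Real.exp (wf y)))

noncomputable def df (a y : ℝ) : ℝ :=
  (a / (1 - a)) * (Real.exp (wf y) * (-Real.log y) / (1 - y)
    - Real.exp (a * wf y) * (1 / (1 - (1 - a) * y) ^ 2
      + ((-Real.log y - 1 + y) / (1 - y) ^ 2) * (1 - y) / (1 - (1 - a) * y)))

lemma wf_hasDeriv {y : ℝ} (h0 : 0 < y) (h1 : y < 1) :
    HasDerivAt wf ((Real.log y + 1 - y) / (1 - y) ^ 2) y := by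
  have hy1 : (1 : ℝ) - y ≠ 0 := by linarith
  have h1' : HasDerivAt (fun y : ℝ => y * Real.log y) (Real.log y + 1) y :=
    Real.hasDerivAt_mul_log h0.ne'
  have h2' : HasDerivAt (fun y : ℝ => 1 - y) (-1) y := by
    simpa using (hasDerivAt_id y).const_sub 1
  have h := h1'.div h2' hy1
  refine h.congr_deriv ?_
  field_simp
  ring

lemma Hf_hasDeriv {a y : ℝ} (ha : 0 < a) (hane : a ≠ 1) (h0 : 0 < y) (h1 : y < 1) :
    HasDerivAt (Hf a) (df a y) y := by
  have hy1 : (1 : ℝ) - y ≠ 0 := by linarith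
  have hD : 0 < 1 - (1 - a) * y := by nlinarith
  have hDne : 1 - (1 - a) * y ≠ 0 := hD.ne'
  have hane' : (1 : ℝ) - a ≠ 0 := by
    intro h; exact hane (by linarith)
  set w' : ℝ := (Real.log y + 1 - y) / (1 - y) ^ 2 with hw'
  have hw : HasDerivAt wf w' y := wf_hasDeriv h0 h1
  have hone : HasDerivAt (fun y : ℝ => 1 - y) (-1) y := by
    simpa using (hasDerivAt_id y).const_sub 1
  have hE : HasDerivAt (fun y => Real.exp (a * wf y))
      (Real.exp (a * wf y) * (a * w')) y := (hw.const_mul a).exp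
  have hG : HasDerivAt (fun y => Real.exp (wf y)) (Real.exp (wf y) * w') y := hw.exp
  have hnum : HasDerivAt (fun y => (1 - y) * Real.exp (a * wf y))
      ((-1) * Real.exp (a * wf y) + (1 - y) * (Real.exp (a * wf y) * (a * w'))) y :=
    hone.mul hE
  have hDd : HasDerivAt (fun y : ℝ => 1 - (1 - a) * y) (-(1 - a)) y := by
    simpa using ((hasDerivAt_id y).const_mul (1 - a)).const_sub 1
  have hA := hnum.div hDd hDne
  have hB : HasDerivAt (fun y => a * ((1 - y) * Real.exp (wf y)))
      (a * ((-1) * Real.exp (wf y) + (1 - y) * (Real.exp (wf y) * w'))) y :=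
    (hone.mul hG).const_mul a
  have htot := ((hA.sub hB).const_mul (1 / (1 - a)))
  refine htot.congr_deriv ?_
  rw [df, hw']
  field_simp
  ring

lemma df_neg {a y : ℝ} (ha : 0 < a) (hane : a ≠ 1) (h0 : 0 < y) (h1 : y < 1) :
    df a y < 0 := by
  have hy1 : (0 : ℝ) < 1 - y := by linarith
  have hℓ : Real.log y < 0 := Real.log_neg h0 h1
  have hw : wf y < 0 := div_neg_of_neg_of_pos (mul_neg_of_pos_of_neg h0 hℓ) hy1
  have hm : 0 < (-Real.log y - 1 + y) / (1 - y) ^ 2 := by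
    apply div_pos _ (by positivity)
    have := Real.log_lt_sub_one_of_pos h0 (by linarith : y ≠ 1)
    linarith
  set m : ℝ := (-Real.log y - 1 + y) / (1 - y) ^ 2 with hmdef
  have hD : 0 < 1 - (1 - a) * y := by nlinarith
  set D : ℝ := 1 - (1 - a) * y with hDdef
  -- identity : -log y / (1-y) = 1 + m*(1-y)
  have hid : Real.exp (wf y) * (-Real.log y) / (1 - y)
      = Real.exp (wf y) * (1 + m * (1 - y)) := by
    rw [hmdef]; field_simp; ring
  rw [df, hid]
  set E := Real.exp (a * wf y) with hE
  set G := Real.exp (wf y) with hG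
  have hGpos : 0 < G := Real.exp_pos _
  have hEpos : 0 < E := Real.exp_pos _
  have hS1 : (0:ℝ) < 1 + m * (1 - y) := by nlinarith
  rcases lt_or_gt_of_ne hane with hlt | hgt
  · -- a < 1 : bracket negative, a/(1-a) positive
    have hfac : 0 < a / (1 - a) := div_pos ha (by linarith)
    apply mul_neg_of_pos_of_neg hfac
    have hGE : G < E := by
      rw [hE, hG]
      exact Real.exp_lt_exp.2 (by nlinarith)
    have hD1 : D < 1 := by rw [hDdef]; nlinarith
    have hS : 1 + m * (1 - y) < 1 / D ^ 2 + m * (1 - y) / D := by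
      have h1' : (1:ℝ) < 1 / D ^ 2 := by
        rw [lt_div_iff₀ (by positivity)]; nlinarith
      have h2' : m * (1 - y) < m * (1 - y) / D := by
        rw [lt_div_iff₀ hD]; nlinarith [mul_pos hm hy1]
      linarith
    have := mul_lt_mul hGE hS.le hS1 hEpos.le
    linarith
  · -- a > 1 : bracket positive, a/(1-a) negative
    have hfac : a / (1 - a) < 0 := div_neg_of_pos_of_neg ha (by linarith)
    apply mul_neg_of_neg_of_pos hfac
    have hGE : E < G := by
      rw [hE, hG]
      exact Real.exp_lt_exp.2 (by nlinarith)
    have hD1 : 1 < D := by rw [hDdef]; nlinarith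
    have hSpos : 0 < 1 / D ^ 2 + m * (1 - y) / D := by positivity
    have hS : 1 / D ^ 2 + m * (1 - y) / D < 1 + m * (1 - y) := by
      have h1' : 1 / D ^ 2 < 1 := by
        rw [div_lt_iff₀ (by positivity)]; nlinarith
      have h2' : m * (1 - y) / D < m * (1 - y) := by
        rw [div_lt_iff₀ (by linarith)]; nlinarith [mul_pos hm hy1]
      linarith
    have := mul_lt_mul hGE hS.le hSpos hGpos.le
    linarith

lemma Fdl_eq {Pr Pb φ1 N : ℝ} (hPr : 0 < Pr) (hPb : 0 < Pb) (hφ1 : 0 < φ1)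
    (hN : 0 < N) (hne : φ1 ≠ N) :
    Fdl Pr Pb φ1 N = 1 - Hf (N / φ1) (Pr / (Pr + Pb)) := by
  have hsum : 0 < Pr + Pb := by linarith
  set y : ℝ := Pr / (Pr + Pb) with hydef
  have hy0 : 0 < y := div_pos hPr hsum
  have hy1 : y < 1 := (div_lt_one hsum).2 (by linarith)
  have h1y : 1 - y = Pb / (Pr + Pb) := by rw [hydef]; field_simp; ring
  have hκ : (Pr + Pb) / Pr = y⁻¹ := by rw [hydef, inv_div]
  have hκpos : 0 < (Pr + Pb) / Pr := div_pos hsum hPr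
  have hlogκ : Real.log ((Pr + Pb) / Pr) = -Real.log y := by
    rw [hκ, Real.log_inv]
  set ℓ : ℝ := Real.log y with hℓ
  have hrpow : ∀ e : ℝ, ((Pr + Pb) / Pr) ^ e = Real.exp ((-ℓ) * e) := by
    intro e; rw [Real.rpow_def_of_pos hκpos, hlogκ]
  have hwf : wf y = (Pr / Pb) * ℓ := by
    rw [wf, h1y, ← hℓ, hydef]
    field_simp
  have hexpℓ : Real.exp ℓ = y := Real.exp_log hy0
  have hφN : φ1 - N ≠ 0 := sub_ne_zero.2 hne
  rw [Fdl, Hf, hrpow, hrpow, hrpow, hrpow, hwf]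
  rw [show (-ℓ) * -(1 + Pr * N / (Pb * φ1)) = ℓ + (Pr * N / (Pb * φ1)) * ℓ by ring,
      show (-ℓ) * -(Pr * N / (Pb * φ1)) = (Pr * N / (Pb * φ1)) * ℓ by ring,
      show (-ℓ) * -((Pr + Pb) / Pb) = ℓ + (Pr / Pb) * ℓ by field_simp; ring,
      show (-ℓ) * ((Pr / Pb) * (1 - N / φ1))
          = (Pr * N / (Pb * φ1)) * ℓ - (Pr / Pb) * ℓ by field_simp; ring,
      show (N / φ1) * ((Pr / Pb) * ℓ) = (Pr * N / (Pb * φ1)) * ℓ by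
        field_simp,
      Real.exp_add, Real.exp_add, Real.exp_sub, hexpℓ]
  set u : ℝ := Real.exp ((Pr * N / (Pb * φ1)) * ℓ) with hu
  set v : ℝ := Real.exp ((Pr / Pb) * ℓ) with hv
  have hvne : v ≠ 0 := Real.exp_ne_zero _
  rw [show Pb * φ1 / (Pr * N) + 1 = (Pb * φ1 + Pr * N) / (Pr * N) by field_simp,
      show φ1 / N - 1 = (φ1 - N) / N by field_simp,
      show 1 - N / φ1 = (φ1 - N) / φ1 by field_simp,
      h1y,
      show 1 - (φ1 - N) / φ1 * y = (Pb * φ1 + N * Pr) / (φ1 * (Pr + Pb)) by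
        rw [hydef]; field_simp; ring,
      hydef]
  have h5 : Pb * φ1 + Pr * N ≠ 0 := by positivity
  have h6 : Pb * φ1 + N * Pr ≠ 0 := by positivity
  field_simp
  ring


lemma Hf_strictAntiOn {a : ℝ} (ha : 0 < a) (hane : a ≠ 1) :
    StrictAntiOn (Hf a) (Set.Ioo (0:ℝ) 1) := by
  apply strictAntiOn_of_deriv_neg (convex_Ioo 0 1)
  · intro y hy
    exact (Hf_hasDeriv ha hane hy.1 hy.2).continuousAt.continuousWithinAt
  · intro y hy
    rw [interior_Ioo] at hy
    rw [(Hf_hasDeriv ha hane hy.1 hy.2).deriv]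
    exact df_neg ha hane hy.1 hy.2

/-- The minimum average detection error probability is strictly increasing in the public
transmit power `P_r` (cf. Fig. 2 of the paper). -/
theorem Fdl_strictMonoOn_Pr
    (Pb φ1 N : ℝ) (hPb : 0 < Pb) (hφ1 : 0 < φ1) (hN : 0 < N) (hne : φ1 ≠ N) :
    StrictMonoOn (fun Pr => Fdl Pr Pb φ1 N) (Set.Ioi (0 : ℝ)) := by
  intro x hx x' hx' hlt
  simp only [Set.mem_Ioi] at hx hx'
  have ha : 0 < N / φ1 := div_pos hN hφ1
  have hane : N / φ1 ≠ 1 := by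
    intro h
    apply hne
    field_simp at h
    linarith
  have hmem : ∀ z : ℝ, 0 < z → z / (z + Pb) ∈ Set.Ioo (0:ℝ) 1 := by
    intro z hz
    constructor
    · positivity
    · rw [div_lt_one (by linarith)]; linarith
  have hyy : x / (x + Pb) < x' / (x' + Pb) := by
    rw [div_lt_div_iff₀ (by linarith) (by linarith)]
    nlinarith
  simp only [Fdl_eq hx hPb hφ1 hN hne, Fdl_eq hx' hPb hφ1 hN hne]
  have := Hf_strictAntiOn ha hane (hmem x hx) (hmem x' hx') hyy
  linarith
end

section
/- Let P_max > 0 and fix φ₁, N > 0 with φ₁ ≠ N. Then the function P_b ↦ F_dl(P_max − P_b, P_b) is strictly decreasing on the interval (0, P_max). -/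
open Real Filter

noncomputable def Gfun (a m : ℝ) : ℝ :=
  Real.exp (-(a * (Real.log (1+m) / m))) / ((1+m) * (m/a + 1)) + 1
  - Real.exp (-(a * (Real.log (1+m) / m)))
  - (m / ((1+m) * (1/a - 1))) * (Real.exp (-(a * (Real.log (1+m) / m)))
      - Real.exp (-(Real.log (1+m) / m)))

lemma Fdl_one_eq_Gfun {a m : ℝ} (ha : 0 < a) (hm : 0 < m) (ha1 : a ≠ 1) :
    Fdl 1 m 1 a = Gfun a m := by
  have h1m : (0:ℝ) < 1 + m := by linarith
  rw [Fdl]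
  have hbase : (1 + m) / 1 = 1 + m := by norm_num
  rw [hbase]
  set L := Real.log (1 + m) with hL_def
  simp only [Real.rpow_def_of_pos h1m, ← hL_def]
  have hexpL : Real.exp L = 1 + m := Real.exp_log h1m
  have e1 : 1 * a / (m * 1) = a / m := by ring
  have e2 : (1 + m) / m = 1 / m + 1 := by field_simp
  have e3 : 1 / m * (1 - a / 1) = 1 / m - a * (1/m) := by ring
  have e4 : m * 1 / (1 * a) = m / a := by ring
  have e5 : (1:ℝ) / a - 1 = 1 / a - 1 := rfl
  rw [e1, e2, e3, e4]
  have f1 : Real.exp (L * -(1 + a / m)) = Real.exp (-(a * (L / m))) * (1 + m)⁻¹ := by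
    rw [show L * -(1 + a / m) = -(a * (L / m)) + -L by ring, Real.exp_add,
      Real.exp_neg (x := L), hexpL]
  have f2 : Real.exp (L * -(a / m)) = Real.exp (-(a * (L / m))) := by ring_nf
  have f3 : Real.exp (L * -(1 / m + 1)) = Real.exp (-(L / m)) * (1 + m)⁻¹ := by
    rw [show L * -(1 / m + 1) = -(L / m) + -L by ring, Real.exp_add,
      Real.exp_neg (x := L), hexpL]
  have f4 : Real.exp (L * (1 / m - a * (1/m))) =
      Real.exp (-(a * (L / m))) * (Real.exp (-(L / m)))⁻¹ := by
    rw [← Real.exp_neg (x := -(L/m)), ← Real.exp_add]; ring_nf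
  rw [f1, f2, f3, f4, Gfun, ← hL_def]
  have hBpos : 0 < Real.exp (-(L / m)) := Real.exp_pos _
  have hq : 1 / a - 1 ≠ 0 := by
    intro h
    apply ha1
    have : 1 / a = 1 := by linarith
    field_simp at this
    linarith
  have hd : m / a + 1 ≠ 0 := by positivity
  generalize Real.exp (-(a * (L / m))) = A
  generalize hBg : Real.exp (-(L / m)) = B
  rw [hBg] at hBpos
  have hBne : B ≠ 0 := ne_of_gt hBpos
  have h1a : (1:ℝ) - a ≠ 0 := sub_ne_zero.mpr (Ne.symm ha1)
  have hD : (1:ℝ) + m + (-(m * a) - a) ≠ 0 := by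
    have h : (1:ℝ) + m + (-(m * a) - a) = (1 + m) * (1 - a) := by ring
    rw [h]; exact mul_ne_zero (ne_of_gt h1m) h1a
  field_simp

lemma Fdl_scale {Pr Pb φ1 N : ℝ} (hPr : 0 < Pr) (hPb : 0 < Pb) (hφ1 : 0 < φ1)
    (hN : 0 < N) : Fdl Pr Pb φ1 N = Fdl 1 (Pb / Pr) 1 (N / φ1) := by
  simp only [Fdl]
  rw [show Pb / Pr * 1 / (1 * (N / φ1)) = Pb * φ1 / (Pr * N) by field_simp]
  rw [show 1 * (N / φ1) / (Pb / Pr * 1) = Pr * N / (Pb * φ1) by field_simp]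
  rw [show (1 + Pb / Pr) / (Pb / Pr) = (Pr + Pb) / Pb by field_simp]
  rw [show (1 + Pb / Pr) / 1 = (Pr + Pb) / Pr by field_simp]
  rw [show Pb / Pr / 1 = Pb / Pr by rw [div_one]]
  rw [show (1:ℝ) / (N / φ1) - 1 = φ1 / N - 1 by rw [one_div_div]]
  rw [show 1 / (Pb / Pr) * (1 - N / φ1 / 1) = Pr / Pb * (1 - N / φ1) by
    rw [one_div_div, div_one]]

noncomputable def Gd (a m : ℝ) : ℝ :=
  -(Real.log (1+m) / (m * (1+m)) * (a / (a-1)) *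
      (Real.exp (-(Real.log (1+m) / m)) - Real.exp (-(a * (Real.log (1+m) / m)))))
  - Real.exp (-(a * (Real.log (1+m) / m))) / (1+m) *
      (a * Real.log (1+m) / (m * (a+m)) + a / (a+m)^2)

set_option maxHeartbeats 2000000 in
lemma Gfun_hasDerivAt {a m : ℝ} (ha : 0 < a) (ha1 : a ≠ 1) (hm : 0 < m) :
    HasDerivAt (Gfun a) (Gd a m) m := by
  have h1m : (0:ℝ) < 1 + m := by linarith
  have hq1 : (1:ℝ)/a - 1 ≠ 0 := by
    intro h
    apply ha1
    have h2 : 1/a = 1 := by linarith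
    field_simp at h2
    linarith
  -- derivative of log(1+x)
  have hlog : HasDerivAt (fun x : ℝ => Real.log (1 + x)) (1 / (1+m)) m := by
    have h : HasDerivAt (fun x : ℝ => 1 + x) 1 m := (hasDerivAt_id m).const_add 1
    simpa using h.log (ne_of_gt h1m)
  -- derivative of q = log(1+x)/x
  have hq : HasDerivAt (fun x : ℝ => Real.log (1 + x) / x)
      ((1 / (1+m) * m - Real.log (1+m) * 1) / m ^ 2) m :=
    hlog.div (hasDerivAt_id m) (ne_of_gt hm)
  set S := (1 / (1+m) * m - Real.log (1+m) * 1) / m ^ 2 with hS_def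
  set eA := Real.exp (-(a * (Real.log (1+m) / m))) with heA_def
  set eB := Real.exp (-(Real.log (1+m) / m)) with heB_def
  have hA : HasDerivAt (fun x : ℝ => Real.exp (-(a * (Real.log (1+x) / x))))
      (eA * -(a * S)) m := ((hq.const_mul a).neg).exp
  have hB : HasDerivAt (fun x : ℝ => Real.exp (-(Real.log (1+x) / x)))
      (eB * -S) m := (hq.neg).exp
  have hd1 : HasDerivAt (fun x : ℝ => (1+x) * (x/a + 1))
      (1 * (m/a + 1) + (1+m) * (1/a)) m :=
    ((hasDerivAt_id m).const_add 1).mul (((hasDerivAt_id m).div_const a).add_const 1)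
  have hd1ne : (1+m) * (m/a + 1) ≠ 0 := by positivity
  have hd3 : HasDerivAt (fun x : ℝ => (1+x) * (1/a - 1)) (1 * (1/a - 1)) m :=
    ((hasDerivAt_id m).const_add 1).mul_const (1/a - 1)
  have hd3ne : (1+m) * (1/a - 1) ≠ 0 := mul_ne_zero (ne_of_gt h1m) hq1
  have term1 : HasDerivAt (fun x : ℝ =>
      Real.exp (-(a * (Real.log (1+x) / x))) / ((1+x) * (x/a + 1)))
      ((eA * -(a * S) * ((1+m) * (m/a + 1)) - eA * (1 * (m/a + 1) + (1+m) * (1/a))) /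
        ((1+m) * (m/a + 1)) ^ 2) m := hA.div hd1 hd1ne
  have coef : HasDerivAt (fun x : ℝ => x / ((1+x) * (1/a - 1)))
      ((1 * ((1+m) * (1/a - 1)) - m * (1 * (1/a - 1))) / ((1+m) * (1/a - 1)) ^ 2) m :=
    (hasDerivAt_id m).div hd3 hd3ne
  have term3 : HasDerivAt (fun x : ℝ => (x / ((1+x) * (1/a - 1))) *
      (Real.exp (-(a * (Real.log (1+x) / x))) - Real.exp (-(Real.log (1+x) / x))))
      ((1 * ((1+m) * (1/a - 1)) - m * (1 * (1/a - 1))) / ((1+m) * (1/a - 1)) ^ 2 *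
        (eA - eB) + m / ((1+m) * (1/a - 1)) * (eA * -(a * S) - eB * -S)) m :=
    coef.mul (hA.sub hB)
  have total := ((term1.add_const 1).sub hA).sub term3
  have heq : (eA * -(a * S) * ((1+m) * (m/a + 1)) - eA * (1 * (m/a + 1) + (1+m) * (1/a))) /
        ((1+m) * (m/a + 1)) ^ 2 - eA * -(a * S) -
      ((1 * ((1+m) * (1/a - 1)) - m * (1 * (1/a - 1))) / ((1+m) * (1/a - 1)) ^ 2 *
        (eA - eB) + m / ((1+m) * (1/a - 1)) * (eA * -(a * S) - eB * -S)) = Gd a m := by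
    rw [Gd, hS_def, ← heA_def, ← heB_def]
    have ham : a + m ≠ 0 := by positivity
    have ha1' : a - 1 ≠ 0 := sub_ne_zero.mpr ha1
    have h1a : (1:ℝ) - a ≠ 0 := sub_ne_zero.mpr (Ne.symm ha1)
    rw [show m/a + 1 = (m+a)/a by field_simp]
    rw [show (1:ℝ)/a - 1 = (1-a)/a by field_simp]
    have hma : m + a ≠ 0 := by positivity
    field_simp
    ring
  rw [← heq]
  exact total

lemma Gd_neg {a m : ℝ} (ha : 0 < a) (ha1 : a ≠ 1) (hm : 0 < m) : Gd a m < 0 := by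
  have h1m : (0:ℝ) < 1 + m := by linarith
  have hL : 0 < Real.log (1+m) := Real.log_pos (by linarith)
  have ht2 : 0 < Real.exp (-(a * (Real.log (1+m) / m))) / (1+m) *
      (a * Real.log (1+m) / (m * (a+m)) + a / (a+m)^2) := by
    apply mul_pos (div_pos (Real.exp_pos _) h1m)
    have h1 : 0 < a * Real.log (1+m) / (m * (a+m)) := by positivity
    have h2 : 0 < a / (a+m)^2 := by positivity
    linarith
  have ht1 : 0 < Real.log (1+m) / (m * (1+m)) * (a / (a-1)) *
      (Real.exp (-(Real.log (1+m) / m)) - Real.exp (-(a * (Real.log (1+m) / m)))) := by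
    have hLm : 0 < Real.log (1+m) / (m * (1+m)) := by positivity
    rcases lt_or_gt_of_ne ha1 with h | h
    · -- a < 1 : B - A < 0 and a/(a-1) < 0
      have hBA : Real.exp (-(Real.log (1+m) / m)) -
          Real.exp (-(a * (Real.log (1+m) / m))) < 0 := by
        have : -(Real.log (1+m) / m) < -(a * (Real.log (1+m) / m)) := by
          have : a * (Real.log (1+m) / m) < 1 * (Real.log (1+m) / m) := by
            apply mul_lt_mul_of_pos_right h (by positivity)
          linarith [this]
        linarith [Real.exp_lt_exp.mpr this]
      have hco : a / (a-1) < 0 := div_neg_of_pos_of_neg ha (by linarith)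
      have := mul_pos_of_neg_of_neg hco hBA
      calc 0 < Real.log (1+m) / (m * (1+m)) * (a / (a-1) *
            (Real.exp (-(Real.log (1+m) / m)) - Real.exp (-(a * (Real.log (1+m) / m))))) :=
          mul_pos hLm this
        _ = _ := by ring
    · -- 1 < a : B - A > 0 and a/(a-1) > 0
      have hBA : 0 < Real.exp (-(Real.log (1+m) / m)) -
          Real.exp (-(a * (Real.log (1+m) / m))) := by
        have : -(a * (Real.log (1+m) / m)) < -(Real.log (1+m) / m) := by
          have : 1 * (Real.log (1+m) / m) < a * (Real.log (1+m) / m) := by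
            apply mul_lt_mul_of_pos_right h (by positivity)
          linarith [this]
        linarith [Real.exp_lt_exp.mpr this]
      have hco : 0 < a / (a-1) := div_pos ha (by linarith)
      calc 0 < Real.log (1+m) / (m * (1+m)) * (a / (a-1) *
            (Real.exp (-(Real.log (1+m) / m)) - Real.exp (-(a * (Real.log (1+m) / m))))) :=
          mul_pos hLm (mul_pos hco hBA)
        _ = _ := by ring
  rw [Gd]
  linarith

/-- Proposition 2 of the paper: with total power `P_r + P_b = P_max`, the minimum average
detection error probability is strictly decreasing in `P_b`. -/
theorem Fdl_strictAntiOn_total_power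
    (Pmax φ1 N : ℝ) (hPmax : 0 < Pmax) (hφ1 : 0 < φ1) (hN : 0 < N) (hne : φ1 ≠ N) :
    StrictAntiOn (fun Pb => Fdl (Pmax - Pb) Pb φ1 N) (Set.Ioo (0 : ℝ) Pmax) := by
  have ha : 0 < N / φ1 := div_pos hN hφ1
  have ha1 : N / φ1 ≠ 1 := by
    intro h
    exact hne ((div_eq_one_iff_eq hφ1.ne').mp h).symm
  have anti : StrictAntiOn (Gfun (N / φ1)) (Set.Ioi (0 : ℝ)) := by
    apply strictAntiOn_of_deriv_neg (convex_Ioi 0)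
    · intro x hx
      exact (Gfun_hasDerivAt ha ha1 hx).continuousAt.continuousWithinAt
    · intro x hx
      rw [interior_Ioi] at hx
      rw [(Gfun_hasDerivAt ha ha1 hx).deriv]
      exact Gd_neg ha ha1 hx
  intro Pb1 hPb1 Pb2 hPb2 h12
  obtain ⟨h1p, h1lt⟩ := hPb1
  obtain ⟨h2p, h2lt⟩ := hPb2
  have hPr1 : 0 < Pmax - Pb1 := by linarith
  have hPr2 : 0 < Pmax - Pb2 := by linarith
  have hm1 : 0 < Pb1 / (Pmax - Pb1) := div_pos h1p hPr1
  have hm2 : 0 < Pb2 / (Pmax - Pb2) := div_pos h2p hPr2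
  have hmlt : Pb1 / (Pmax - Pb1) < Pb2 / (Pmax - Pb2) := by
    rw [div_lt_div_iff₀ hPr1 hPr2]
    nlinarith
  have e1 : Fdl (Pmax - Pb1) Pb1 φ1 N = Gfun (N / φ1) (Pb1 / (Pmax - Pb1)) := by
    rw [Fdl_scale hPr1 h1p hφ1 hN, Fdl_one_eq_Gfun ha hm1 ha1]
  have e2 : Fdl (Pmax - Pb2) Pb2 φ1 N = Gfun (N / φ1) (Pb2 / (Pmax - Pb2)) := by
    rw [Fdl_scale hPr2 h2p hφ1 hN, Fdl_one_eq_Gfun ha hm2 ha1]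
  show Fdl (Pmax - Pb2) Pb2 φ1 N < Fdl (Pmax - Pb1) Pb1 φ1 N
  rw [e1, e2]
  exact anti hm1 hm2 hmlt
end

section
/- Set κ̃ = (P̃_r·m₁ + P̃_b·m₂)/(P̃_r·m₁) and define τ* = σ² + P̃_r·w₁ + P̃_b·w₂ if w₂ ≥ (P̃_r·m₁/P̃_b)·ln κ̃, and τ* = σ² + P̃_r·w₁ − P̃_r·(m₁/m₂)·w₂ + (P̃_r·m₁·(P̃_r·m₁ + P̃_b·m₂)/(P̃_b·m₂))·ln κ̃ otherwise. Then τ* is a global minimizer of the uplink detection error probability: ξ_ul(τ*) ≤ ξ_ul(τ) for every τ ∈ ℝ. -/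
open Real

/-- `ν₃(τ)` of the paper (eq. (27)). -/
noncomputable def nu3 (Pr m1 w1 σ2 τ : ℝ) : ℝ :=
  Real.exp ((σ2 + Pr * w1 - τ) / (Pr * m1))

/-- `ν₄(τ)` of the paper (eq. (28)). -/
noncomputable def nu4 (Pr Pb m1 m2 w1 w2 σ2 τ : ℝ) : ℝ :=
  Real.exp ((σ2 + Pr * w1 + Pb * w2 - τ) / (Pr * m1 + Pb * m2))

/-- The uplink detection error probability `ξ_{w,ul}(τ)` of the paper (eq. (30)). -/
noncomputable def xiUl (Pr Pb m1 m2 w1 w2 σ2 τ : ℝ) : ℝ :=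
  if τ < σ2 + Pr * w1 then 1
  else if τ ≤ σ2 + Pr * w1 + Pb * w2 then nu3 Pr m1 w1 σ2 τ
  else 1 + nu3 Pr m1 w1 σ2 τ - nu4 Pr Pb m1 m2 w1 w2 σ2 τ

lemma key_ineq {a b : ℝ} (u : ℝ) (ha : 0 < a) (hab : a ≤ b) :
    b * Real.exp (-u / b) ≤ a * Real.exp (-u / a) + (b - a) := by
  have hb : 0 < b := ha.trans_le hab
  have hw1 : (0:ℝ) ≤ a / b := by positivity
  have hw2 : (0:ℝ) ≤ 1 - a / b := by
    have : a / b ≤ 1 := (div_le_one hb).2 hab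
    linarith
  have hsum : a / b + (1 - a / b) = 1 := by ring
  have h := convexOn_exp.2 (Set.mem_univ (-u / a)) (Set.mem_univ (0:ℝ)) hw1 hw2 hsum
  simp only [smul_eq_mul, mul_zero, add_zero, Real.exp_zero, mul_one] at h
  have heq : a / b * (-u / a) = -u / b := by field_simp
  rw [heq] at h
  have h2 := mul_le_mul_of_nonneg_left h hb.le
  calc b * Real.exp (-u / b) ≤ b * (a / b * Real.exp (-u / a) + (1 - a / b)) := h2
    _ = a * Real.exp (-u / a) + (b - a) := by field_simp


/-- Theorem 3 of the paper: the optimal detection threshold `τ*` globally minimizes the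
uplink detection error probability. -/
theorem optimal_threshold_minimizes_xiUl
    (Pr Pb m1 m2 w1 w2 σ2 : ℝ) (hPr : 0 < Pr) (hPb : 0 < Pb)
    (hm1 : 0 < m1) (hm2 : 0 < m2) (hw1 : 0 ≤ w1) (hw2 : 0 ≤ w2) (hσ2 : 0 ≤ σ2) :
    let κ : ℝ := (Pr * m1 + Pb * m2) / (Pr * m1)
    let τstar : ℝ :=
      if w2 ≥ (Pr * m1 / Pb) * Real.log κ then σ2 + Pr * w1 + Pb * w2
      else σ2 + Pr * w1 - Pr * (m1 / m2) * w2 +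
        (Pr * m1 * (Pr * m1 + Pb * m2) / (Pb * m2)) * Real.log κ
    ∀ τ : ℝ, xiUl Pr Pb m1 m2 w1 w2 σ2 τstar ≤ xiUl Pr Pb m1 m2 w1 w2 σ2 τ := by
  intro κ τstar τ
  set a : ℝ := Pr * m1 with ha_def
  set b : ℝ := Pr * m1 + Pb * m2 with hb_def
  set A : ℝ := σ2 + Pr * w1 with hA_def
  set B : ℝ := σ2 + Pr * w1 + Pb * w2 with hB_def
  have hκdef : κ = b / a := rfl
  have hτdef : τstar = if w2 ≥ a / Pb * Real.log κ
      then B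
      else A - Pr * (m1 / m2) * w2 + a * b / (Pb * m2) * Real.log κ := rfl
  have hnu3 : ∀ t : ℝ, nu3 Pr m1 w1 σ2 t = Real.exp ((A - t) / a) := fun t => rfl
  have hnu4 : ∀ t : ℝ, nu4 Pr Pb m1 m2 w1 w2 σ2 t = Real.exp ((B - t) / b) := fun t => rfl
  have hxi : ∀ t : ℝ, xiUl Pr Pb m1 m2 w1 w2 σ2 t =
      if t < A then 1
      else if t ≤ B then Real.exp ((A - t) / a)
      else 1 + Real.exp ((A - t) / a) - Real.exp ((B - t) / b) := by
    intro t; rw [xiUl, hnu3, hnu4]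
  clear_value τstar κ B A b a
  clear hnu3 hnu4
  have ha : 0 < a := by rw [ha_def]; positivity
  have hb : 0 < b := by rw [hb_def]; positivity
  have hab : a < b := by rw [ha_def, hb_def]; nlinarith [mul_pos hPb hm2]
  have hAB : A ≤ B := by rw [hA_def, hB_def]; nlinarith [mul_nonneg hPb.le hw2]
  have hBA : B - A = Pb * w2 := by rw [hA_def, hB_def]; ring
  have hLpos : 0 < Real.log κ := Real.log_pos (by rw [hκdef]; exact (one_lt_div ha).2 hab)
  have hlogκ : Real.log κ = Real.log (b / a) := by rw [hκdef]
  rw [hxi τstar, hxi τ]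
  by_cases hcase : w2 ≥ a / Pb * Real.log κ
  · -- τstar = B
    have hτs : τstar = B := by rw [hτdef, if_pos hcase]
    rw [hτs, if_neg (not_lt.2 hAB), if_pos le_rfl]
    have hcase2 : a * Real.log κ ≤ Pb * w2 := by
      rw [ge_iff_le, div_mul_eq_mul_div, div_le_iff₀ hPb] at hcase
      linarith
    -- c ≤ a / b
    have hc_ab : Real.exp ((A - B) / a) ≤ a / b := by
      have h1 : (A - B) / a ≤ Real.log (a / b) := by
        have hlog : Real.log (a / b) = - Real.log (b / a) := by
          rw [← Real.log_inv]; congr 1; rw [inv_div]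
        rw [hlog, ← hlogκ, div_le_iff₀ ha]
        nlinarith
      calc Real.exp ((A - B) / a) ≤ Real.exp (Real.log (a / b)) := Real.exp_le_exp.2 h1
        _ = a / b := Real.exp_log (by positivity)
    have hc1 : Real.exp ((A - B) / a) ≤ 1 := by
      rw [Real.exp_le_one_iff]
      exact div_nonpos_of_nonpos_of_nonneg (by linarith) ha.le
    split_ifs with h1 h2
    · linarith
    · exact Real.exp_le_exp.2 (by gcongr <;> linarith)
    · -- τ > B
      push_neg at h1 h2
      set s : ℝ := τ - B with hs_def
      have hs : 0 < s := by rw [hs_def]; linarith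
      have hAτ : (A - τ) / a = (A - B) / a + -s / a := by rw [hs_def]; ring
      have hBτ : (B - τ) / b = -s / b := by rw [hs_def]; ring
      rw [hAτ, hBτ, Real.exp_add]
      have hkey := key_ineq s ha hab.le
      have he1 : Real.exp (-s / a) ≤ 1 := by
        rw [Real.exp_le_one_iff]
        exact div_nonpos_of_nonpos_of_nonneg (by linarith) ha.le
      have h3 : a * (1 - Real.exp (-s / a)) ≤ b * (1 - Real.exp (-s / b)) := by linarith
      have h4 : Real.exp ((A - B) / a) * (1 - Real.exp (-s / a)) ≤
          a / b * (1 - Real.exp (-s / a)) :=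
        mul_le_mul_of_nonneg_right hc_ab (by linarith)
      have h5 : a / b * (1 - Real.exp (-s / a)) ≤ 1 - Real.exp (-s / b) := by
        rw [div_mul_eq_mul_div, div_le_iff₀ hb]
        nlinarith
      linarith
  · -- interior optimum
    push_neg at hcase
    have hτdef' : τstar = A - a / m2 * w2 + a * b / (Pb * m2) * Real.log κ := by
      rw [hτdef, if_neg (not_le.2 hcase), ha_def]
      ring
    have hτsB : B < τstar := by
      have hexp : τstar - B = b / m2 * (a / Pb * Real.log κ - w2) := by
        rw [hτdef', hA_def, hB_def, ha_def, hb_def]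
        field_simp
        ring
      have hpos : 0 < b / m2 * (a / Pb * Real.log κ - w2) :=
        mul_pos (by positivity) (sub_pos.2 hcase)
      linarith [hexp ▸ hpos]
    -- stationarity
    have hstat : (B - τstar) / b = (A - τstar) / a + Real.log κ := by
      rw [hτdef', hA_def, hB_def, ha_def, hb_def]
      field_simp
      ring
    set α := Real.exp ((A - τstar) / a) with hα_def
    clear_value α
    have hαpos : 0 < α := hα_def ▸ Real.exp_pos _
    have hnu4s : Real.exp ((B - τstar) / b) = b / a * α := by
      rw [hstat, Real.exp_add, hlogκ, Real.exp_log (by positivity), hα_def]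
      ring
    -- global minimum of F at τstar
    have hFmin : ∀ t : ℝ, 1 + α - b / a * α ≤
        1 + Real.exp ((A - t) / a) - Real.exp ((B - t) / b) := by
      intro t
      have hAt : (A - t) / a = (A - τstar) / a + -(t - τstar) / a := by ring
      have hBt : (B - t) / b = (B - τstar) / b + -(t - τstar) / b := by ring
      rw [hAt, hBt, Real.exp_add, Real.exp_add, hnu4s, ← hα_def]
      have hkey := key_ineq (t - τstar) ha hab.le
      have h6 : b / a * α * Real.exp (-(t - τstar) / b) ≤
          α * Real.exp (-(t - τstar) / a) + b / a * α - α := by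
        have h2 := mul_le_mul_of_nonneg_left hkey (show 0 ≤ α / a by positivity)
        calc b / a * α * Real.exp (-(t - τstar) / b)
            = α / a * (b * Real.exp (-(t - τstar) / b)) := by ring
          _ ≤ α / a * (a * Real.exp (-(t - τstar) / a) + (b - a)) := h2
          _ = α * Real.exp (-(t - τstar) / a) + b / a * α - α := by field_simp; ring
      linarith
    rw [if_neg (not_lt.2 (by linarith : A ≤ τstar)), if_neg (not_le.2 hτsB), hnu4s]
    split_ifs with h1 h2
    · have hba : 1 ≤ b / a := (one_le_div ha).2 hab.le
      have hαba : α ≤ b / a * α := le_mul_of_one_le_left hαpos.le hba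
      linarith
    · push_neg at h1
      have hF := hFmin τ
      have hone : 1 ≤ Real.exp ((B - τ) / b) :=
        Real.one_le_exp (div_nonneg (by linarith) hb.le)
      linarith
    · exact hFmin τ
end

section
/- Set κ̃ = (P̃_r·m₁ + P̃_b·m₂)/(P̃_r·m₁) and define τ* = σ² + P̃_r·w₁ + P̃_b·w₂ if w₂ ≥ (P̃_r·m₁/P̃_b)·ln κ̃, and τ* = σ² + P̃_r·w₁ − P̃_r·(m₁/m₂)·w₂ + (P̃_r·m₁·(P̃_r·m₁ + P̃_b·m₂)/(P̃_b·m₂))·ln κ̃ otherwise. Then ξ_ul(τ*) = exp(−P̃_b·w₂/(P̃_r·m₁)) if w₂ ≥ (P̃_r·m₁/P̃_b)·ln κ̃, and ξ_ul(τ*) = 1 − (P̃_b·m₂/(P̃_r·m₁))·κ̃^{−(P̃_r·m₁+P̃_b·m₂)/(P̃_b·m₂)}·exp(w₂/m₂) otherwise. -/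
open Real

/-- Equation (31) of the paper: the value of the uplink detection error probability at the
optimal detection threshold `τ*` of Theorem 3. -/
theorem xiUl_at_optimal_threshold
    (Pr Pb m1 m2 w1 w2 σ2 : ℝ) (hPr : 0 < Pr) (hPb : 0 < Pb)
    (hm1 : 0 < m1) (hm2 : 0 < m2) (hw1 : 0 ≤ w1) (hw2 : 0 ≤ w2) (hσ2 : 0 ≤ σ2) :
    let κ : ℝ := (Pr * m1 + Pb * m2) / (Pr * m1)
    let τstar : ℝ :=
      if w2 ≥ (Pr * m1 / Pb) * Real.log κ then σ2 + Pr * w1 + Pb * w2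
      else σ2 + Pr * w1 - Pr * (m1 / m2) * w2 +
        (Pr * m1 * (Pr * m1 + Pb * m2) / (Pb * m2)) * Real.log κ
    xiUl Pr Pb m1 m2 w1 w2 σ2 τstar =
      if w2 ≥ (Pr * m1 / Pb) * Real.log κ then Real.exp (-(Pb * w2) / (Pr * m1))
      else 1 - (Pb * m2 / (Pr * m1)) * κ ^ (-((Pr * m1 + Pb * m2) / (Pb * m2))) *
        Real.exp (w2 / m2) := by
  intro κ τstar
  have hA : 0 < Pr * m1 := by positivity
  have hB : 0 < Pb * m2 := by positivity
  have hκ1 : 1 < κ := by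
    rw [lt_div_iff₀ hA]; nlinarith
  have hκ0 : 0 < κ := lt_trans one_pos hκ1
  set L := Real.log κ with hLdef
  have hL : 0 < L := Real.log_pos hκ1
  by_cases h : w2 ≥ (Pr * m1 / Pb) * L
  · simp only [τstar]; rw [← hLdef]; simp only [if_pos h]
    unfold xiUl
    rw [if_neg (by nlinarith), if_pos le_rfl]
    unfold nu3
    congr 1
    ring
  · simp only [τstar, if_neg h]
    rw [← hLdef]
    rw [if_neg h]
    have h' : w2 < Pr * m1 / Pb * L := not_le.mp h
    have key : σ2 + Pr * w1 - Pr * (m1 / m2) * w2 +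
        Pr * m1 * (Pr * m1 + Pb * m2) / (Pb * m2) * L - (σ2 + Pr * w1 + Pb * w2)
        = ((Pr * m1 + Pb * m2) / m2) * (Pr * m1 / Pb * L - w2) := by
      field_simp
      ring
    have hgt : σ2 + Pr * w1 + Pb * w2 < σ2 + Pr * w1 - Pr * (m1 / m2) * w2 +
        Pr * m1 * (Pr * m1 + Pb * m2) / (Pb * m2) * L := by
      have hpos : 0 < ((Pr * m1 + Pb * m2) / m2) * (Pr * m1 / Pb * L - w2) := by
        apply mul_pos
        · positivity
        · linarith
      linarith [key ▸ hpos]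
    unfold xiUl
    rw [if_neg (by nlinarith), if_neg (by push_neg; exact hgt)]
    have e3 : nu3 Pr m1 w1 σ2 (σ2 + Pr * w1 - Pr * (m1 / m2) * w2 +
        Pr * m1 * (Pr * m1 + Pb * m2) / (Pb * m2) * L)
        = Real.exp (w2 / m2 - (Pr * m1 + Pb * m2) / (Pb * m2) * L) := by
      unfold nu3; congr 1; field_simp; ring
    have e4 : nu4 Pr Pb m1 m2 w1 w2 σ2 (σ2 + Pr * w1 - Pr * (m1 / m2) * w2 +
        Pr * m1 * (Pr * m1 + Pb * m2) / (Pb * m2) * L)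
        = Real.exp (w2 / m2 - Pr * m1 / (Pb * m2) * L) := by
      unfold nu4; congr 1; field_simp; ring
    have e4' : Real.exp (w2 / m2 - Pr * m1 / (Pb * m2) * L)
        = κ * Real.exp (w2 / m2 - (Pr * m1 + Pb * m2) / (Pb * m2) * L) := by
      rw [← Real.exp_log hκ0, ← hLdef, ← Real.exp_add]
      congr 1
      field_simp
      ring
    have erp : κ ^ (-((Pr * m1 + Pb * m2) / (Pb * m2)))
        = Real.exp (-((Pr * m1 + Pb * m2) / (Pb * m2)) * L) := by
      rw [Real.rpow_def_of_pos hκ0, ← hLdef, mul_comm]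
    have ee : Real.exp (-((Pr * m1 + Pb * m2) / (Pb * m2)) * L) * Real.exp (w2 / m2)
        = Real.exp (w2 / m2 - (Pr * m1 + Pb * m2) / (Pb * m2) * L) := by
      rw [← Real.exp_add]; ring_nf
    have hκeq : κ = 1 + Pb * m2 / (Pr * m1) := by
      show (Pr * m1 + Pb * m2) / (Pr * m1) = _
      field_simp
    rw [e3, e4, e4', erp, mul_assoc, ee, hκeq]
    ring
end

section
/- Let T = (P̃_r·N/(P̃_b·φ₃))·ln κ̃ and define f : [0,∞) → ℝ by f(x) = exp(−P̃_b·φ₃·x/(P̃_r·N)) for x ≥ T, and f(x) = 1 − (P̃_b/(P̃_r·φ₂))·κ̃^{−(P̃_r·φ₂+P̃_b)/P̃_b}·exp(φ₄·x/N) for 0 ≤ x < T. Then ∫₀^∞ f(x)·e^{−x} dx = F_ul(P̃_r, P̃_b). -/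
open Real Filter MeasureTheory

lemma exp_int_Ioi {c : ℝ} (a : ℝ) (hc : 0 < c) :
    ∫ x in Set.Ioi a, Real.exp (-(c*x)) = Real.exp (-(c*a))/c := by
  have h : ∀ x ∈ Set.Ici a, HasDerivAt (fun x => -Real.exp (-(c*x))/c) (Real.exp (-(c*x))) x := by
    intro x _
    have : HasDerivAt (fun x => -(c*x)) (-c) x := by
      have h := ((hasDerivAt_id' x).const_mul c).neg
      rw [mul_one] at h
      exact h
    have := (this.exp).neg.div_const c
    simpa [mul_comm, hc.ne', mul_div_assoc] using this
  have hint : IntegrableOn (fun x => Real.exp (-(c*x))) (Set.Ioi a) := by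
    simpa [neg_mul] using exp_neg_integrableOn_Ioi a hc
  have htend : Tendsto (fun x => -Real.exp (-(c*x))/c) atTop (nhds 0) := by
    have : Tendsto (fun x : ℝ => -(c*x)) atTop atBot :=
      tendsto_neg_atBot_iff.2 (tendsto_id.const_mul_atTop hc)
    have := (Real.tendsto_exp_atBot.comp this).neg.div_const c
    simpa using this
  have := integral_Ioi_of_hasDerivAt_of_tendsto' h hint htend
  rw [this]; ring

lemma exp_int_interval {c : ℝ} (hc : c ≠ 0) (a b : ℝ) :
    ∫ x in a..b, Real.exp (c*x) = (Real.exp (c*b) - Real.exp (c*a))/c := by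
  have := intervalIntegral.integral_comp_mul_left (a := a) (b := b) (fun x => Real.exp x) hc
  rw [this, integral_exp]
  simp [smul_eq_mul, div_eq_inv_mul]

/-- The closed-form minimum average detection error probability of Theorem 4 of the paper
(eq. (32)). -/
noncomputable def Ful (Pr Pb φ2 φ3 φ4 N : ℝ) : ℝ :=
  ((Pr * φ2 + Pb) / (Pr * φ2)) ^ (-(1 + Pr * N / (Pb * φ3))) / (Pb * φ3 / (Pr * N) + 1) +
    1 - ((Pr * φ2 + Pb) / (Pr * φ2)) ^ (-(Pr * N / (Pb * φ3))) -
    ((Pb / (Pr * φ2)) * ((Pr * φ2 + Pb) / (Pr * φ2)) ^ (-((Pr * φ2 + Pb) / Pb)) /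
        (φ4 / N - 1)) *
      (((Pr * φ2 + Pb) / (Pr * φ2)) ^ ((Pr / Pb) * (φ2 - N / φ3)) - 1)

/-- Theorem 4 of the paper: averaging the uplink minimum detection error probability
(eq. (31)) against the exponential density of the direct channel gain gives the closed
form `F_ul`. -/
theorem integral_min_detection_error_eq_Ful
    (Pr Pb φ2 φ3 φ4 N : ℝ) (hPr : 0 < Pr) (hPb : 0 < Pb)
    (hφ2 : 0 < φ2) (hφ3 : 0 < φ3) (hφ4 : 0 < φ4) (hN : 0 < N)
    (hprod : φ4 = φ2 * φ3) (hne : φ4 ≠ N) :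
    let κ : ℝ := (Pr * φ2 + Pb) / (Pr * φ2)
    let T : ℝ := (Pr * N / (Pb * φ3)) * Real.log κ
    let f : ℝ → ℝ := fun x =>
      if T ≤ x then Real.exp (-(Pb * φ3 * x) / (Pr * N))
      else 1 - (Pb / (Pr * φ2)) * κ ^ (-((Pr * φ2 + Pb) / Pb)) * Real.exp (φ4 * x / N)
    ∫ x in Set.Ioi (0 : ℝ), f x * Real.exp (-x) = Ful Pr Pb φ2 φ3 φ4 N := by
  intro κ T f
  have hPrφ2 : (0:ℝ) < Pr * φ2 := by positivity
  have hκ : 1 < κ := by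
    rw [show κ = (Pr * φ2 + Pb) / (Pr * φ2) from rfl, lt_div_iff₀ hPrφ2]; linarith
  have hκ0 : (0:ℝ) < κ := lt_trans one_pos hκ
  have hL : 0 < Real.log κ := Real.log_pos hκ
  have hT : 0 < T := by
    have : (0:ℝ) < Pr * N / (Pb * φ3) := by positivity
    exact mul_pos this hL
  set a : ℝ := Pb * φ3 / (Pr * N) with ha
  have ha0 : 0 < a := by positivity
  set C : ℝ := (Pb / (Pr * φ2)) * κ ^ (-((Pr * φ2 + Pb) / Pb)) with hCdef
  set b : ℝ := φ4 / N with hb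
  have hb1 : b - 1 ≠ 0 := by
    rw [hb]; intro h
    exact hne (by field_simp at h; linarith)
  -- the two pieces
  have hfT : ∀ x ∈ Set.Ioi T, f x * Real.exp (-x) = Real.exp (-((a+1)*x)) := by
    intro x hx
    have hx' : T ≤ x := le_of_lt hx
    show (if T ≤ x then Real.exp (-(Pb * φ3 * x) / (Pr * N))
      else 1 - (Pb / (Pr * φ2)) * κ ^ (-((Pr * φ2 + Pb) / Pb)) * Real.exp (φ4 * x / N))
        * Real.exp (-x) = _
    rw [if_pos hx', ← Real.exp_add]
    congr 1
    rw [ha]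
    field_simp
    ring
  have hfI : ∀ x ∈ Set.Ioo 0 T, f x * Real.exp (-x)
      = (1 - C * Real.exp (b*x)) * Real.exp (-x) := by
    intro x hx
    have hx' : ¬ T ≤ x := not_le.2 hx.2
    show (if T ≤ x then Real.exp (-(Pb * φ3 * x) / (Pr * N))
      else 1 - (Pb / (Pr * φ2)) * κ ^ (-((Pr * φ2 + Pb) / Pb)) * Real.exp (φ4 * x / N))
        * Real.exp (-x) = _
    rw [if_neg hx']
    rw [hCdef, hb]
    congr 3
    field_simp
  have hg1cont : Continuous (fun x => (1 - C * Real.exp (b*x)) * Real.exp (-x)) := by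
    fun_prop
  have hint2 : IntegrableOn (fun x => f x * Real.exp (-x)) (Set.Ioi T) := by
    have h0 : IntegrableOn (fun x => Real.exp (-(a+1) * x)) (Set.Ioi T) :=
      exp_neg_integrableOn_Ioi T (by linarith : (0:ℝ) < a + 1)
    simp only [neg_mul] at h0
    exact h0.congr_fun (fun x hx => (hfT x hx).symm) measurableSet_Ioi
  have hint1 : IntegrableOn (fun x => f x * Real.exp (-x)) (Set.Ioc 0 T) := by
    rw [integrableOn_Ioc_iff_integrableOn_Ioo]
    have : IntegrableOn (fun x => (1 - C * Real.exp (b*x)) * Real.exp (-x)) (Set.Ioo 0 T) :=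
      (hg1cont.integrableOn_Ioc).mono_set Set.Ioo_subset_Ioc_self
    exact this.congr_fun (fun x hx => (hfI x hx).symm) measurableSet_Ioo
  have hsplit : ∫ x in Set.Ioi (0:ℝ), f x * Real.exp (-x)
      = (∫ x in Set.Ioc 0 T, f x * Real.exp (-x)) + ∫ x in Set.Ioi T, f x * Real.exp (-x) := by
    rw [← Set.Ioc_union_Ioi_eq_Ioi hT.le,
      setIntegral_union Set.Ioc_disjoint_Ioi_same measurableSet_Ioi hint1 hint2]
  have hI2 : ∫ x in Set.Ioi T, f x * Real.exp (-x) = Real.exp (-((a+1)*T))/(a+1) := by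
    rw [setIntegral_congr_fun measurableSet_Ioi hfT]
    exact exp_int_Ioi T (by linarith)
  have hI1 : ∫ x in Set.Ioc 0 T, f x * Real.exp (-x)
      = (1 - Real.exp (-T)) - C * ((Real.exp ((b-1)*T) - 1)/(b-1)) := by
    rw [integral_Ioc_eq_integral_Ioo, setIntegral_congr_fun measurableSet_Ioo hfI,
      ← integral_Ioc_eq_integral_Ioo, ← intervalIntegral.integral_of_le hT.le]
    have heq : ∀ x : ℝ, (1 - C * Real.exp (b*x)) * Real.exp (-x)
        = Real.exp ((-1)*x) - C * Real.exp ((b-1)*x) := by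
      intro x
      have h1 : Real.exp ((b-1)*x) = Real.exp (b*x) * Real.exp (-x) := by
        rw [← Real.exp_add]; congr 1; ring
      rw [h1, neg_one_mul]; ring
    simp_rw [heq]
    rw [intervalIntegral.integral_sub, intervalIntegral.integral_const_mul,
      exp_int_interval (by norm_num : (-1:ℝ) ≠ 0), exp_int_interval hb1]
    · simp; ring
    · exact (Continuous.intervalIntegrable (by fun_prop) _ _)
    · exact (Continuous.intervalIntegrable (by fun_prop) _ _)
  -- key exponential identities
  have hrpow : ∀ r : ℝ, κ ^ r = Real.exp (Real.log κ * r) := fun r =>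
    Real.rpow_def_of_pos hκ0 r
  have e1 : Real.exp (-((a+1)*T)) = κ ^ (-(1 + Pr * N / (Pb * φ3))) := by
    rw [hrpow]; congr 1
    rw [show T = (Pr * N / (Pb * φ3)) * Real.log κ from rfl, ha]
    field_simp
  have e2 : Real.exp (-T) = κ ^ (-(Pr * N / (Pb * φ3))) := by
    rw [hrpow]; congr 1
    rw [show T = (Pr * N / (Pb * φ3)) * Real.log κ from rfl]
    ring
  have e3 : Real.exp ((b-1)*T) = κ ^ ((Pr / Pb) * (φ2 - N / φ3)) := by
    rw [hrpow]; congr 1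
    rw [show T = (Pr * N / (Pb * φ3)) * Real.log κ from rfl, hb, hprod]
    field_simp
  rw [hsplit, hI1, hI2, e1, e2, e3]
  show _ = Ful Pr Pb φ2 φ3 φ4 N
  rw [Ful]
  rw [show ((Pr * φ2 + Pb) / (Pr * φ2)) = κ from rfl, ← ha, ← hb, ← hCdef]
  ring
end

section
/- For fixed P̃_r, φ₂, φ₃, φ₄, N > 0 with φ₄ = φ₂·φ₃ and φ₄ ≠ N, the closed-form minimum average detection error probability tends to zero as the covert transmit power grows: F_ul(P̃_r, P̃_b) → 0 as P̃_b → ∞. -/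
open Real Filter MeasureTheory

/-- Claim 1) of Remark 5 of the paper: the uplink minimum average detection error
probability tends to zero as the covert transmit power grows. -/
theorem Ful_tendsto_zero_as_Pb_atTop
    (Pr φ2 φ3 φ4 N : ℝ) (hPr : 0 < Pr)
    (hφ2 : 0 < φ2) (hφ3 : 0 < φ3) (hφ4 : 0 < φ4) (hN : 0 < N)
    (hprod : φ4 = φ2 * φ3) (hne : φ4 ≠ N) :
    Tendsto (fun Pb => Ful Pr Pb φ2 φ3 φ4 N) atTop (nhds 0) := by
  set c : ℝ := Pr * φ2 with hc
  have hcpos : 0 < c := by positivity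
  set k : ℝ := Pr * N / φ3 with hk
  have hkpos : 0 < k := by positivity
  set e : ℝ := Pr * (φ2 - N / φ3) with he
  set L : ℝ → ℝ := fun Pb => Real.log ((c + Pb) / c) with hLdef
  -- the base tends to infinity
  have hx_top : Tendsto (fun Pb : ℝ => (c + Pb) / c) atTop atTop :=
    (tendsto_atTop_add_const_left atTop c tendsto_id).atTop_div_const hcpos
  have hL_top : Tendsto L atTop atTop := Real.tendsto_log_atTop.comp hx_top
  -- L Pb / Pb → 0
  have hlogdiv : Tendsto (fun t : ℝ => Real.log t / t) atTop (nhds 0) :=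
    Real.isLittleO_log_id_atTop.tendsto_div_nhds_zero
  have hratio : Tendsto (fun Pb : ℝ => (c + Pb) / c / Pb) atTop (nhds (1 / c)) := by
    have h1 : Tendsto (fun Pb : ℝ => 1 / Pb + 1 / c) atTop (nhds (0 + 1 / c)) := by
      exact ((tendsto_inv_atTop_zero).congr (fun x => (one_div x).symm)).add tendsto_const_nhds
    rw [zero_add] at h1
    refine h1.congr' ?_
    filter_upwards [eventually_gt_atTop (0 : ℝ)] with Pb hPb
    rw [div_div, add_comm, div_add_div _ _ hcpos.ne' (ne_of_gt hPb)]
    congr 1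
    ring
  have hL0 : Tendsto (fun Pb : ℝ => L Pb / Pb) atTop (nhds 0) := by
    have h1 : Tendsto (fun Pb : ℝ => (Real.log ((c + Pb) / c) / ((c + Pb) / c)) *
        ((c + Pb) / c / Pb)) atTop (nhds (0 * (1 / c))) :=
      (hlogdiv.comp hx_top).mul hratio
    rw [zero_mul] at h1
    refine h1.congr' ?_
    filter_upwards [eventually_gt_atTop (0 : ℝ)] with Pb hPb
    have hxpos : 0 < (c + Pb) / c := by positivity
    have hxne : (c + Pb) / c ≠ 0 := ne_of_gt hxpos
    rw [div_mul_div_comm, mul_comm ((c + Pb) / c) Pb, mul_div_mul_right _ _ hxne]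
  -- the reformulated function
  set g : ℝ → ℝ := fun Pb =>
    Real.exp (-(1 + k / Pb) * L Pb) / (Pb * φ3 / (Pr * N) + 1)
      + 1 - Real.exp (-k * (L Pb / Pb))
      - ((Pb / (c + Pb)) * Real.exp (-c * (L Pb / Pb)) / (φ4 / N - 1)) *
          (Real.exp (e * (L Pb / Pb)) - 1) with hg
  -- limits of the pieces of g
  have hT1 : Tendsto (fun Pb : ℝ => Real.exp (-(1 + k / Pb) * L Pb) / (Pb * φ3 / (Pr * N) + 1))
      atTop (nhds 0) := by
    have hcoef : Tendsto (fun Pb : ℝ => 1 + k / Pb) atTop (nhds 1) := by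
      have := (tendsto_const_nhds (x := k) (f := atTop (α := ℝ))).div_atTop tendsto_id
      simpa using (tendsto_const_nhds (x := (1:ℝ)) (f := atTop (α := ℝ))).add this
    have hmul : Tendsto (fun Pb : ℝ => (1 + k / Pb) * L Pb) atTop atTop :=
      hcoef.pos_mul_atTop one_pos hL_top
    have hnum : Tendsto (fun Pb : ℝ => Real.exp (-(1 + k / Pb) * L Pb)) atTop (nhds 0) := by
      have h := Real.tendsto_exp_atBot.comp (tendsto_neg_atTop_atBot.comp hmul)
      refine h.congr fun Pb => ?_
      simp only [Function.comp_apply]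
      rw [neg_mul]
    have hden : Tendsto (fun Pb : ℝ => Pb * φ3 / (Pr * N) + 1) atTop atTop :=
      tendsto_atTop_add_const_right _ 1
        ((tendsto_id.atTop_mul_const hφ3).atTop_div_const (by positivity))
    exact hnum.div_atTop hden
  have explim : ∀ a : ℝ, Tendsto (fun Pb : ℝ => Real.exp (a * (L Pb / Pb))) atTop (nhds 1) := by
    intro a
    have h1 : Tendsto (fun Pb : ℝ => a * (L Pb / Pb)) atTop (nhds (a * 0)) := hL0.const_mul a
    rw [mul_zero] at h1
    have := (Real.continuous_exp.tendsto 0).comp h1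
    simpa [Function.comp_def] using this
  have hD : Tendsto (fun Pb : ℝ => Pb / (c + Pb)) atTop (nhds 1) := by
    have h0 : Tendsto (fun Pb : ℝ => c / Pb) atTop (nhds 0) :=
      tendsto_const_nhds.div_atTop tendsto_id
    have h1 : Tendsto (fun Pb : ℝ => 1 / (c / Pb + 1)) atTop (nhds (1 / (0 + 1))) :=
      tendsto_const_nhds.div (h0.add tendsto_const_nhds) (by norm_num)
    rw [show (1 : ℝ) / (0 + 1) = 1 by norm_num] at h1
    refine h1.congr' ?_
    filter_upwards [eventually_gt_atTop (0 : ℝ)] with Pb hPb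
    have hPbne : Pb ≠ 0 := ne_of_gt hPb
    have hcPb : (0:ℝ) < c + Pb := by linarith
    field_simp
  have hglim : Tendsto g atTop (nhds 0) := by
    have h3 : Tendsto (fun Pb : ℝ =>
        ((Pb / (c + Pb)) * Real.exp (-c * (L Pb / Pb)) / (φ4 / N - 1)) *
          (Real.exp (e * (L Pb / Pb)) - 1)) atTop
        (nhds ((1 * 1 / (φ4 / N - 1)) * (1 - 1))) :=
      (((hD.mul (explim (-c))).div_const (φ4 / N - 1))).mul
        ((explim e).sub tendsto_const_nhds)
    have hone : Tendsto (fun _ : ℝ => (1 : ℝ)) atTop (nhds 1) := tendsto_const_nhds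
    have htot := ((hT1.add hone).sub (explim (-k))).sub h3
    have hval : (0 : ℝ) + 1 - 1 - 1 * 1 / (φ4 / N - 1) * (1 - 1) = 0 := by ring
    rw [hval] at htot
    exact htot
  -- eventual equality of Ful and g
  refine hglim.congr' ?_
  filter_upwards [eventually_gt_atTop (0 : ℝ)] with Pb hPb
  have hPbne : Pb ≠ 0 := ne_of_gt hPb
  have hxpos : 0 < (c + Pb) / c := by positivity
  have hcPb : (0:ℝ) < c + Pb := by linarith
  have hLval : L Pb = Real.log ((c + Pb) / c) := rfl
  have h1 : ((c + Pb) / c) ^ (-(1 + Pr * N / (Pb * φ3))) =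
      Real.exp (-(1 + k / Pb) * L Pb) := by
    rw [Real.rpow_def_of_pos hxpos, hLval]
    congr 1
    simp only [hk]
    field_simp
  have h2 : ((c + Pb) / c) ^ (-(Pr * N / (Pb * φ3))) =
      Real.exp (-k * (L Pb / Pb)) := by
    rw [Real.rpow_def_of_pos hxpos, hLval]
    congr 1
    simp only [hk]
    field_simp
  have h3 : ((c + Pb) / c) ^ (-((c + Pb) / Pb)) =
      (c / (c + Pb)) * Real.exp (-c * (L Pb / Pb)) := by
    rw [Real.rpow_def_of_pos hxpos, hLval]
    have harg : Real.log ((c + Pb) / c) * -((c + Pb) / Pb) =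
        -Real.log ((c + Pb) / c) + -c * (Real.log ((c + Pb) / c) / Pb) := by
      field_simp
      ring
    rw [harg, Real.exp_add, Real.exp_neg, Real.exp_log hxpos, inv_div]
  have h4 : ((c + Pb) / c) ^ ((Pr / Pb) * (φ2 - N / φ3)) =
      Real.exp (e * (L Pb / Pb)) := by
    rw [Real.rpow_def_of_pos hxpos, hLval]
    congr 1
    simp only [he]
    field_simp
  show g Pb = Ful Pr Pb φ2 φ3 φ4 N
  rw [hg]
  simp only [Ful, ← hc, h1, h2, h3, h4]
  have hfin : Pb / c * (c / (c + Pb) * Real.exp (-c * (L Pb / Pb))) / (φ4 / N - 1) =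
      Pb / (c + Pb) * Real.exp (-c * (L Pb / Pb)) / (φ4 / N - 1) := by
    rw [show Pb / c * (c / (c + Pb) * Real.exp (-c * (L Pb / Pb))) =
        (Pb / c * (c / (c + Pb))) * Real.exp (-c * (L Pb / Pb)) by ring]
    rw [div_mul_div_comm, mul_comm c (c + Pb), mul_div_mul_right _ _ (ne_of_gt hcpos)]
  rw [hfin]
end

section
/- For fixed P̃_b, φ₂, φ₃, φ₄, N > 0 with φ₄ = φ₂·φ₃ and φ₄ ≠ N, the closed-form minimum average detection error probability tends to one as the public transmit power grows: F_ul(P̃_r, P̃_b) → 1 as P̃_r → ∞. -/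
open Real Filter MeasureTheory

/-- Auxiliary limit: for positive `Pb`, `φ2`, the base `(Pr*φ2+Pb)/(Pr*φ2)` raised to an
affine exponent `a*Pr+b` tends to `exp ((Pb/φ2)*a)`. -/
lemma aux_rpow_affine_tendsto (Pb φ2 : ℝ) (hPb : 0 < Pb) (hφ2 : 0 < φ2) (a b : ℝ) :
    Tendsto (fun Pr : ℝ => ((Pr * φ2 + Pb) / (Pr * φ2)) ^ (a * Pr + b)) atTop
      (nhds (Real.exp ((Pb / φ2) * a))) := by
  set c : ℝ := Pb / φ2 with hc
  have hbase : Tendsto (fun Pr : ℝ => (1 + c / Pr) ^ Pr) atTop (nhds (Real.exp c)) :=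
    tendsto_one_add_div_rpow_exp c
  have h1 : Tendsto (fun Pr : ℝ => 1 + c / Pr) atTop (nhds 1) := by
    have h0 : Tendsto (fun Pr : ℝ => c / Pr) atTop (nhds 0) :=
      tendsto_const_nhds.div_atTop tendsto_id
    simpa using (tendsto_const_nhds (x := (1:ℝ))).add h0
  have hA : Tendsto (fun Pr : ℝ => ((1 + c / Pr) ^ Pr) ^ a * (1 + c / Pr) ^ b) atTop
      (nhds ((Real.exp c) ^ a * (1:ℝ) ^ b)) :=
    (hbase.rpow_const (Or.inl (Real.exp_pos c).ne')).mul (h1.rpow_const (Or.inl one_ne_zero))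
  have hval : (Real.exp c) ^ a * (1:ℝ) ^ b = Real.exp (c * a) := by
    rw [Real.one_rpow, mul_one, ← Real.exp_mul]
  rw [hval] at hA
  refine hA.congr' ?_
  filter_upwards [eventually_gt_atTop (0:ℝ)] with Pr hPr
  have hgpos : 0 < 1 + c / Pr := by positivity
  have hbase_eq : (Pr * φ2 + Pb) / (Pr * φ2) = 1 + c / Pr := by
    field_simp [hc]
    rw [hc, mul_add, mul_div_cancel₀ Pb hφ2.ne']
    ring
  rw [hbase_eq, Real.rpow_add hgpos, mul_comm a Pr, Real.rpow_mul hgpos.le]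

/-- Claim 2) of Remark 5 of the paper: the uplink minimum average detection error
probability tends to one as the public transmit power grows. -/
theorem Ful_tendsto_one_as_Pr_atTop
    (Pb φ2 φ3 φ4 N : ℝ) (hPb : 0 < Pb)
    (hφ2 : 0 < φ2) (hφ3 : 0 < φ3) (hφ4 : 0 < φ4) (hN : 0 < N)
    (hprod : φ4 = φ2 * φ3) (hne : φ4 ≠ N) :
    Tendsto (fun Pr => Ful Pr Pb φ2 φ3 φ4 N) atTop (nhds 1) := by
  set c : ℝ := Pb / φ2 with hc
  -- term 1 numerator
  have hT1 : Tendsto (fun Pr : ℝ => ((Pr * φ2 + Pb) / (Pr * φ2)) ^ (-(1 + Pr * N / (Pb * φ3))))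
      atTop (nhds (Real.exp (c * (-(N / (Pb * φ3)))))) := by
    have := aux_rpow_affine_tendsto Pb φ2 hPb hφ2 (-(N / (Pb * φ3))) (-1)
    refine this.congr (fun Pr => ?_) |>.congr' (Eventually.of_forall fun _ => rfl) |>.mono_right le_rfl
    congr 1
    ring
  -- term 1 denominator
  have hT2 : Tendsto (fun Pr : ℝ => Pb * φ3 / (Pr * N) + 1) atTop (nhds 1) := by
    have h0 : Tendsto (fun Pr : ℝ => Pb * φ3 / (Pr * N)) atTop (nhds 0) :=
      tendsto_const_nhds.div_atTop (Tendsto.atTop_mul_const hN tendsto_id)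
    simpa using h0.add (tendsto_const_nhds (x := (1:ℝ)))
  -- term 3
  have hT3 : Tendsto (fun Pr : ℝ => ((Pr * φ2 + Pb) / (Pr * φ2)) ^ (-(Pr * N / (Pb * φ3))))
      atTop (nhds (Real.exp (c * (-(N / (Pb * φ3)))))) := by
    have := aux_rpow_affine_tendsto Pb φ2 hPb hφ2 (-(N / (Pb * φ3))) 0
    refine this.congr (fun Pr => ?_)
    congr 1
    ring
  -- term 4 pieces
  have hT4 : Tendsto (fun Pr : ℝ => Pb / (Pr * φ2)) atTop (nhds 0) :=
    tendsto_const_nhds.div_atTop (Tendsto.atTop_mul_const hφ2 tendsto_id)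
  have hT5 : Tendsto (fun Pr : ℝ => ((Pr * φ2 + Pb) / (Pr * φ2)) ^ (-((Pr * φ2 + Pb) / Pb)))
      atTop (nhds (Real.exp (c * (-(φ2 / Pb))))) := by
    have := aux_rpow_affine_tendsto Pb φ2 hPb hφ2 (-(φ2 / Pb)) (-1)
    refine this.congr (fun Pr => ?_)
    congr 1
    field_simp
    ring
  have hT6 : Tendsto (fun Pr : ℝ => ((Pr * φ2 + Pb) / (Pr * φ2)) ^ ((Pr / Pb) * (φ2 - N / φ3)))
      atTop (nhds (Real.exp (c * ((φ2 - N / φ3) / Pb)))) := by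
    have := aux_rpow_affine_tendsto Pb φ2 hPb hφ2 ((φ2 - N / φ3) / Pb) 0
    refine this.congr (fun Pr => ?_)
    congr 1
    field_simp
    ring
  have key := (((hT1.div hT2 one_ne_zero).add (tendsto_const_nhds (x := (1:ℝ)))).sub hT3).sub
    ((((hT4.mul hT5).div_const (φ4 / N - 1)).mul (hT6.sub (tendsto_const_nhds (x := (1:ℝ))))))
  have hval : Real.exp (c * (-(N / (Pb * φ3)))) / 1 + 1 - Real.exp (c * (-(N / (Pb * φ3)))) -
      0 * Real.exp (c * (-(φ2 / Pb))) / (φ4 / N - 1) *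
        (Real.exp (c * ((φ2 - N / φ3) / Pb)) - 1) = 1 := by
    ring
  rw [hval] at key
  exact key.congr (fun Pr => rfl)
end

section
/- Let 0 < c₁ < c₂ and A, B ∈ ℝ. Define g : ℝ → ℝ by g(τ) = 1 + exp((A − τ)/c₁) − exp((B − τ)/c₂), and let τ† = (c₁·c₂/(c₂ − c₁))·(A/c₁ − B/c₂ + ln(c₂/c₁)). Then g is strictly decreasing on (−∞, τ†] and strictly increasing on [τ†, ∞); in particular, τ† is the unique global minimizer of g on ℝ. -/
open Real

/-- The key calculus step of Appendix B of the paper: for `0 < c₁ < c₂`, the function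
`g(τ) = 1 + exp((A − τ)/c₁) − exp((B − τ)/c₂)` is strictly decreasing before its
stationary point `τ†` of eq. (A-2) and strictly increasing after it, so `τ†` is the unique
global minimizer. -/
theorem stationary_point_unique_global_min
    (c1 c2 A B : ℝ) (hc1 : 0 < c1) (hc12 : c1 < c2) :
    let g : ℝ → ℝ := fun τ => 1 + Real.exp ((A - τ) / c1) - Real.exp ((B - τ) / c2)
    let τdag : ℝ := (c1 * c2 / (c2 - c1)) * (A / c1 - B / c2 + Real.log (c2 / c1))
    StrictAntiOn g (Set.Iic τdag) ∧ StrictMonoOn g (Set.Ici τdag) ∧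
      ∀ τ : ℝ, τ ≠ τdag → g τdag < g τ := by
  intro g τdag
  have hc2 : 0 < c2 := hc1.trans hc12
  have hd : (0:ℝ) < c2 - c1 := by linarith
  have hcc : (0:ℝ) < c1 * c2 := mul_pos hc1 hc2
  have hderiv : ∀ τ : ℝ, HasDerivAt g
      (Real.exp ((B - τ) / c2) / c2 - Real.exp ((A - τ) / c1) / c1) τ := by
    intro τ
    have h1 : HasDerivAt (fun τ : ℝ => (A - τ) / c1) (-1 / c1) τ := by
      simpa using ((hasDerivAt_id τ).const_sub A).div_const c1
    have h2 : HasDerivAt (fun τ : ℝ => (B - τ) / c2) (-1 / c2) τ := by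
      simpa using ((hasDerivAt_id τ).const_sub B).div_const c2
    have := (h1.exp.const_add 1).sub h2.exp
    refine this.congr_deriv ?_
    ring
  have hlog : Real.log (c2 / c1) = Real.log c2 - Real.log c1 :=
    Real.log_div (ne_of_gt hc2) (ne_of_gt hc1)
  have hτdag2 : τdag * (c2 - c1) = c2 * A - c1 * B + c1 * c2 * (Real.log c2 - Real.log c1) := by
    show (c1 * c2 / (c2 - c1)) * (A / c1 - B / c2 + Real.log (c2 / c1)) * (c2 - c1) = _
    rw [hlog]; field_simp
  have e1 : ∀ τ : ℝ, c1 * c2 * ((A - τ) / c1 - Real.log c1)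
      = c2 * (A - τ) - c1 * c2 * Real.log c1 := by
    intro τ; field_simp
  have e2 : ∀ τ : ℝ, c1 * c2 * ((B - τ) / c2 - Real.log c2)
      = c1 * (B - τ) - c1 * c2 * Real.log c2 := by
    intro τ; field_simp
  have key1 : ∀ τ : ℝ, τ < τdag → (B - τ) / c2 - Real.log c2 < (A - τ) / c1 - Real.log c1 := by
    intro τ h
    have h' := mul_lt_mul_of_pos_right h hd
    have h3 : c1 * c2 * ((B - τ) / c2 - Real.log c2) < c1 * c2 * ((A - τ) / c1 - Real.log c1) := by
      rw [e1, e2]; nlinarith [hτdag2]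
    exact (mul_lt_mul_iff_right₀ hcc).1 h3
  have key2 : ∀ τ : ℝ, τdag < τ → (A - τ) / c1 - Real.log c1 < (B - τ) / c2 - Real.log c2 := by
    intro τ h
    have h' := mul_lt_mul_of_pos_right h hd
    have h3 : c1 * c2 * ((A - τ) / c1 - Real.log c1) < c1 * c2 * ((B - τ) / c2 - Real.log c2) := by
      rw [e1, e2]; nlinarith [hτdag2]
    exact (mul_lt_mul_iff_right₀ hcc).1 h3
  have dneg : ∀ τ ∈ Set.Iio τdag,
      Real.exp ((B - τ) / c2) / c2 - Real.exp ((A - τ) / c1) / c1 < 0 := by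
    intro τ hτ
    have : Real.exp ((B - τ) / c2 - Real.log c2) < Real.exp ((A - τ) / c1 - Real.log c1) :=
      Real.exp_lt_exp.2 (key1 τ hτ)
    rw [Real.exp_sub, Real.exp_sub, Real.exp_log hc1, Real.exp_log hc2] at this
    linarith
  have dpos : ∀ τ ∈ Set.Ioi τdag,
      0 < Real.exp ((B - τ) / c2) / c2 - Real.exp ((A - τ) / c1) / c1 := by
    intro τ hτ
    have : Real.exp ((A - τ) / c1 - Real.log c1) < Real.exp ((B - τ) / c2 - Real.log c2) :=
      Real.exp_lt_exp.2 (key2 τ hτ)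
    rw [Real.exp_sub, Real.exp_sub, Real.exp_log hc1, Real.exp_log hc2] at this
    linarith
  have hcont : Continuous g := by continuity
  have hanti : StrictAntiOn g (Set.Iic τdag) := by
    apply strictAntiOn_of_deriv_neg (convex_Iic τdag) hcont.continuousOn
    intro τ hτ
    rw [interior_Iic] at hτ
    rw [(hderiv τ).deriv]
    exact dneg τ hτ
  have hmono : StrictMonoOn g (Set.Ici τdag) := by
    apply strictMonoOn_of_deriv_pos (convex_Ici τdag) hcont.continuousOn
    intro τ hτ
    rw [interior_Ici] at hτ
    rw [(hderiv τ).deriv]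
    exact dpos τ hτ
  refine ⟨hanti, hmono, fun τ hne => ?_⟩
  rcases lt_or_gt_of_ne hne with hlt | hgt
  · exact hanti (Set.mem_Iic.2 hlt.le) Set.self_mem_Iic hlt
  · exact hmono Set.self_mem_Ici (Set.mem_Ici.2 hgt.le) hgt
end
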